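/- arXiv:1009.4750 — 6 statements merged into one kernel-verified Lean document; each statement's English description precedes it below -/
import Mathlib

section
/- Let M be a collection of (n,d)-types that is closed under taking coordinatewise nonempty subsets (if A∈M and J_i are nonempty with J_i⊆A_i for all i∈[n], then (J_1,…,J_n)∈M). If for any two types A,B∈M there exists a strong path in M from A to B, then M satisfies the elimination property: for any A,B∈M and any j∈[n] there exists C∈M with C_j=A_j∪B_j and C_k∈{A_k, B_k, A_k∪B_k} for all k∈[n]. -/
open scoped Classical

namespace TOMPaper

variable {n d : ℕ}

/-- The undirected adjacency relation (on `Fin n ⊕ Fin d`) of the subgraph of the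
complete bipartite graph `K_{n,d}` encoded by `T` (edge `(i,j)` iff `j ∈ T i`). -/
def Adj (T : Fin n → Finset (Fin d)) : Fin n ⊕ Fin d → Fin n ⊕ Fin d → Prop
  | Sum.inl i, Sum.inr j => j ∈ T i
  | Sum.inr j, Sum.inl i => j ∈ T i
  | _, _ => False

/-- `T` is a spanning tree of `K_{n,d}`: connected and with exactly `n + d - 1` edges. -/
def IsSpanningTree (T : Fin n → Finset (Fin d)) : Prop :=
  (∀ u v : Fin n ⊕ Fin d, Relation.ReflTransGen (Adj T) u v) ∧
  (∑ i : Fin n, (T i).card) = n + d - 1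

/-- The subgraph `T ∖ e` where `e` is the edge `(i, j)`. -/
def DeleteEdge (T : Fin n → Finset (Fin d)) (i : Fin n) (j : Fin d) :
    Fin n → Finset (Fin d) :=
  Function.update T i ((T i).erase j)

/-- The subgraph `T` of `K_{n,d}` has an isolated vertex. -/
def HasIsolatedVertex (T : Fin n → Finset (Fin d)) : Prop :=
  (∃ i : Fin n, T i = ∅) ∨ (∃ j : Fin d, ∀ i : Fin n, j ∉ T i)

/-- One directed step in `U(T,T')`: edges of `T` oriented left-to-right and
edges of `T'` oriented right-to-left. -/
def UStep (T T' : Fin n → Finset (Fin d)) : Fin n ⊕ Fin d → Fin n ⊕ Fin d → Prop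
  | Sum.inl i, Sum.inr j => j ∈ T i
  | Sum.inr j, Sum.inl i => j ∈ T' i
  | _, _ => False

/-- The directed graph `U(T,T')` has no directed cycle. -/
def UAcyclic (T T' : Fin n → Finset (Fin d)) : Prop :=
  ∀ v, ¬ Relation.TransGen (UStep T T') v v

/-- The collection `𝒯` of subgraphs of `K_{n,d}` encodes a fine mixed subdivision of
`nΔ_{d-1}` (equivalently, a triangulation of `Δ_{n-1} × Δ_{d-1}`). -/
def EncodesFMS (𝒯 : Set (Fin n → Finset (Fin d))) : Prop :=
  𝒯.Nonempty ∧
  (∀ T ∈ 𝒯, IsSpanningTree T) ∧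
  (∀ T ∈ 𝒯, ∀ i : Fin n, ∀ j ∈ T i,
    HasIsolatedVertex (DeleteEdge T i j) ∨
    ∃ T' ∈ 𝒯, T' ≠ T ∧ ∀ i', DeleteEdge T i j i' ⊆ T' i') ∧
  (∀ T ∈ 𝒯, ∀ T' ∈ 𝒯, UAcyclic T T')

/-- The set of types of `𝒯`: tuples of nonempty sets contained coordinatewise in
some tree of `𝒯`. -/
def Types (𝒯 : Set (Fin n → Finset (Fin d))) : Set (Fin n → Finset (Fin d)) :=
  {A | (∀ i, (A i).Nonempty) ∧ ∃ T ∈ 𝒯, ∀ i, A i ⊆ T i}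

/-- Boundary axiom. -/
def Boundary (M : Set (Fin n → Finset (Fin d))) : Prop :=
  ∀ j : Fin d, (fun _ : Fin n => ({j} : Finset (Fin d))) ∈ M

/-- Elimination axiom. -/
def Elimination (M : Set (Fin n → Finset (Fin d))) : Prop :=
  ∀ A ∈ M, ∀ B ∈ M, ∀ j : Fin n, ∃ C ∈ M,
    C j = A j ∪ B j ∧ ∀ k : Fin n, C k = A k ∨ C k = B k ∨ C k = A k ∪ B k

/-- An admissible traversal step from `j` to `k` in the comparability graph `CG_{A,B}`:
either a directed edge `j → k`, or an undirected edge between `j` and `k` (which may be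
traversed in either direction).  In both cases this amounts to `j ∈ A i`, `k ∈ B i`
for some `i`. -/
def CGArc (A B : Fin n → Finset (Fin d)) (j k : Fin d) : Prop :=
  ∃ i : Fin n, j ∈ A i ∧ k ∈ B i

/-- A strictly directed edge `j → k` of the comparability graph `CG_{A,B}`. -/
def CGDirected (A B : Fin n → Finset (Fin d)) (j k : Fin d) : Prop :=
  ∃ i : Fin n, j ∈ A i ∧ k ∈ B i ∧ ¬ (j ∈ A i ∩ B i ∧ k ∈ A i ∩ B i)

/-- `CG_{A,B}` has no directed cycle: there is no closed walk using at least one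
directed edge (equivalently, no directed cycle with distinct vertices). -/
def CGAcyclic (A B : Fin n → Finset (Fin d)) : Prop :=
  ¬ ∃ j k : Fin d, CGDirected A B j k ∧ Relation.ReflTransGen (CGArc A B) k j

/-- Comparability axiom. -/
def Comparability (M : Set (Fin n → Finset (Fin d))) : Prop :=
  ∀ A ∈ M, ∀ B ∈ M, CGAcyclic A B

/-- `P = (P 0, …, P (r-1))` is an ordered partition of `[d]`. -/
def IsOrderedPartition {r : ℕ} (P : Fin r → Finset (Fin d)) : Prop :=
  (∀ s, (P s).Nonempty) ∧ (∀ s t, s ≠ t → Disjoint (P s) (P t)) ∧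
  (∀ j : Fin d, ∃ s, j ∈ P s)

/-- Surrounding axiom: every refinement `A_P = (A i ∩ P (m i))_i`, where `m i` is the
largest index with `A i ∩ P (m i)` nonempty, lies in `M`. -/
def Surrounding (M : Set (Fin n → Finset (Fin d))) : Prop :=
  ∀ A ∈ M, ∀ r : ℕ, ∀ P : Fin r → Finset (Fin d), IsOrderedPartition P →
    ∀ m : Fin n → Fin r,
      (∀ i, (A i ∩ P (m i)).Nonempty ∧ ∀ s, (A i ∩ P s).Nonempty → s ≤ m i) →
      (fun i => A i ∩ P (m i)) ∈ M

/-- `M` is a tropical oriented matroid with parameters `(n,d)`. -/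
def IsTOM (M : Set (Fin n → Finset (Fin d))) : Prop :=
  (∀ A ∈ M, ∀ i, (A i).Nonempty) ∧
  Boundary M ∧ Elimination M ∧ Comparability M ∧ Surrounding M

/-- Two types are adjacent: they differ in exactly one coordinate, and in that
coordinate they differ by exactly one element. -/
def TypeAdj (A B : Fin n → Finset (Fin d)) : Prop :=
  ∃ i : Fin n, (∀ k, k ≠ i → A k = B k) ∧
    ((∃ x, x ∉ A i ∧ B i = insert x (A i)) ∨ (∃ x, x ∉ B i ∧ A i = insert x (B i)))

/-- `C 0, C 1, …, C q` is a path of types from `A` to `B` all of whose members lie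
in `M`. -/
def IsPathIn (M : Set (Fin n → Finset (Fin d))) (q : ℕ)
    (C : ℕ → Fin n → Finset (Fin d)) (A B : Fin n → Finset (Fin d)) : Prop :=
  C 0 = A ∧ C q = B ∧ (∀ t ≤ q, C t ∈ M) ∧ ∀ t < q, TypeAdj (C t) (C (t + 1))

/-- `C 0, C 1, …, C q` is a path of types from `A` to `B` (no membership condition). -/
def IsPath (q : ℕ) (C : ℕ → Fin n → Finset (Fin d))
    (A B : Fin n → Finset (Fin d)) : Prop :=
  C 0 = A ∧ C q = B ∧ ∀ t < q, TypeAdj (C t) (C (t + 1))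

/-- The path `C 0, …, C q` from `A` to `B` is strong in coordinate `i`:
(1) after some element is deleted from coordinate `i`, no element is ever added to it;
(2) `C t i ⊆ A i ∪ B i` for all `t`;
(3) once an element is added to coordinate `i`, it is never deleted afterwards. -/
def StrongIn (q : ℕ) (C : ℕ → Fin n → Finset (Fin d))
    (A B : Fin n → Finset (Fin d)) (i : Fin n) : Prop :=
  (∀ s t, s ≤ t → t < q → ¬ C s i ⊆ C (s + 1) i → C (t + 1) i ⊆ C t i) ∧
  (∀ t ≤ q, C t i ⊆ A i ∪ B i) ∧
  (∀ s t, s < t → t ≤ q → ∀ x, x ∉ C s i → x ∈ C (s + 1) i → x ∈ C t i)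

/-- Left degree vector: `ldv T i = deg_T(i) - 1` over left vertices. -/
def ldv (T : Fin n → Finset (Fin d)) : Fin n → ℕ := fun i => (T i).card - 1

/-- Degree of the right vertex `j` in `T`. -/
def rdeg (T : Fin n → Finset (Fin d)) : Fin d → ℕ :=
  fun j => (Finset.univ.filter (fun i : Fin n => j ∈ T i)).card

/-- Right degree vector: `rdv T j = deg_T(j) - 1` over right vertices. -/
def rdv (T : Fin n → Finset (Fin d)) : Fin d → ℕ := fun j => rdeg T j - 1

/-- The subgraph of `K_{n,d}` encoded by `T` contains a cycle: an alternating closed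
sequence of distinct left vertices and distinct right vertices. -/
def HasCycle (T : Fin n → Finset (Fin d)) : Prop :=
  ∃ m : ℕ, ∃ L : Fin (m + 2) → Fin n, ∃ R : Fin (m + 2) → Fin d,
    Function.Injective L ∧ Function.Injective R ∧
    ∀ s : Fin (m + 2), R s ∈ T (L s) ∧ R s ∈ T (L (s + 1))

/-- `Q_α(M)`: the types `A ∈ M` with `|A i| > α i` for all `i`. -/
def Qset (M : Set (Fin n → Finset (Fin d))) (α : Fin n → ℕ) :
    Set (Fin n → Finset (Fin d)) :=
  {A | A ∈ M ∧ ∀ i, α i < (A i).card}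

/-- Two cells share a common facet. -/
def ShareFacet (T T' : Fin n → Finset (Fin d)) : Prop :=
  ∃ i : Fin n, ∃ j ∈ T i, ∃ i' : Fin n, ∃ j' ∈ T' i',
    DeleteEdge T i j = DeleteEdge T' i' j' ∧
    ¬ HasIsolatedVertex (DeleteEdge T i j)

/-- The set of right vertices lying in a different connected component of `T` than
the right vertex `v`. -/
def OppComponent (T : Fin n → Finset (Fin d)) (v : Fin d) : Set (Fin d) :=
  {j | ¬ Relation.ReflTransGen (Adj T) (Sum.inr j) (Sum.inr v)}

/-- The simplex `Δ_I ⊆ ℝ^d`: the convex hull of the standard basis vectors indexed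
by `I`. -/
def simplexOf (I : Finset (Fin d)) : Set (Fin d → ℝ) :=
  convexHull ℝ {x : Fin d → ℝ | ∃ i ∈ I, x = Pi.single i 1}

/-- The Minkowski sum `Δ_{T 1} + ⋯ + Δ_{T n} ⊆ ℝ^d`. -/
def cell (T : Fin n → Finset (Fin d)) : Set (Fin d → ℝ) :=
  {x | ∃ y : Fin n → Fin d → ℝ, (∀ i, y i ∈ simplexOf (T i)) ∧ x = ∑ i, y i}

/-- The unit simplex at location `a`: the convex hull of `a + e 1, …, a + e d`. -/
def unitSimplexAt (a : Fin d → ℕ) : Set (Fin d → ℝ) :=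
  convexHull ℝ {x : Fin d → ℝ | ∃ j : Fin d, x = (fun j' => (a j' : ℝ)) + Pi.single j 1}

/-- A matrix is totally unimodular if every square submatrix has determinant
`0`, `1` or `-1`. -/
def IsTU {R C : Type*} (Y : Matrix R C ℚ) : Prop :=
  ∀ k : ℕ, ∀ f : Fin k → R, ∀ g : Fin k → C,
    Function.Injective f → Function.Injective g →
      (Y.submatrix f g).det = 0 ∨ (Y.submatrix f g).det = 1 ∨ (Y.submatrix f g).det = -1

/-- `Δ(A,B) = Σ_i (|A_i ∖ B_i| + |B_i ∖ A_i|)`. -/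
def deltaDist (A B : Fin n → Finset (Fin d)) : ℕ :=
  ∑ i : Fin n, ((A i \ B i).card + (B i \ A i).card)


lemma chain_subset {α : Type*} (f : ℕ → Finset α) (a : ℕ) :
    ∀ b, a ≤ b → (∀ t, a ≤ t → t < b → f t ⊆ f (t + 1)) → f a ⊆ f b := by
  intro b
  induction b with
  | zero => intro hab _; simp [Nat.le_zero.mp hab]
  | succ b ih =>
    intro hab h
    rcases Nat.lt_or_ge a (b + 1) with h1 | h1
    · have hab' : a ≤ b := Nat.lt_succ_iff.mp h1
      exact (ih hab' (fun t ht htb => h t ht (Nat.lt_succ_of_lt htb))).trans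
        (h b hab' (Nat.lt_succ_self b))
    · have : a = b + 1 := le_antisymm hab h1
      subst this; exact subset_rfl

lemma chain_subset_rev {α : Type*} (f : ℕ → Finset α) (a : ℕ) :
    ∀ b, a ≤ b → (∀ t, a ≤ t → t < b → f (t + 1) ⊆ f t) → f b ⊆ f a := by
  intro b
  induction b with
  | zero => intro hab _; simp [Nat.le_zero.mp hab]
  | succ b ih =>
    intro hab h
    rcases Nat.lt_or_ge a (b + 1) with h1 | h1
    · have hab' : a ≤ b := Nat.lt_succ_iff.mp h1
      exact (h b hab' (Nat.lt_succ_self b)).trans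
        (ih hab' (fun t ht htb => h t ht (Nat.lt_succ_of_lt htb)))
    · have : a = b + 1 := le_antisymm hab h1
      subst this; exact subset_rfl

/-- if a collection of `(n,d)`-types is closed under coordinatewise
nonempty subsets and any two of its members are joined by a strong path inside it,
then it satisfies the elimination property. -/
theorem strong_path_implies_elimination {n d : ℕ}
    (M : Set (Fin n → Finset (Fin d)))
    (hM : ∀ A ∈ M, ∀ i, (A i).Nonempty)
    (hclosed : ∀ A ∈ M, ∀ J : Fin n → Finset (Fin d),
      (∀ i, (J i).Nonempty) → (∀ i, J i ⊆ A i) → J ∈ M)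
    (hpath : ∀ A ∈ M, ∀ B ∈ M, ∃ q : ℕ, ∃ C : ℕ → Fin n → Finset (Fin d),
      IsPathIn M q C A B ∧ ∀ i, StrongIn q C A B i) :
    Elimination M := by
  intro A hA B hB j
  obtain ⟨q, C, ⟨hC0, hCq, hmem, _⟩, hS⟩ := hpath A hA B hB
  -- find `t0`: time of first deletion in coordinate `j` (or `q` if none)
  obtain ⟨t0, ht0q, hAincr, hBsub⟩ :
      ∃ t0, t0 ≤ q ∧ (∀ s, s < t0 → C s j ⊆ C (s + 1) j) ∧ B j ⊆ C t0 j := by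
    by_cases hex : ∃ t, t < q ∧ ¬ C t j ⊆ C (t + 1) j
    · refine ⟨Nat.find hex, le_of_lt (Nat.find_spec hex).1, ?_, ?_⟩
      · intro s hs
        have hsq : s < q := lt_trans hs (Nat.find_spec hex).1
        have := Nat.find_min hex hs
        push_neg at this
        exact this hsq
      · have : C q j ⊆ C (Nat.find hex) j := by
          refine chain_subset_rev (fun t => C t j) _ q
            (le_of_lt (Nat.find_spec hex).1) (fun t ht htq => ?_)
          exact (hS j).1 (Nat.find hex) t ht htq (Nat.find_spec hex).2
        rw [hCq] at this; exact this
    · push_neg at hex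
      exact ⟨q, le_rfl, fun s hs => hex s hs, by rw [hCq]⟩
  have hAjsub : A j ⊆ C t0 j := by
    have : C 0 j ⊆ C t0 j :=
      chain_subset (fun t => C t j) 0 t0 (Nat.zero_le _)
        (fun t _ ht => hAincr t ht)
    rwa [hC0] at this
  have hjeq : C t0 j = A j ∪ B j :=
    subset_antisymm ((hS j).2.1 t0 ht0q) (Finset.union_subset hAjsub hBsub)
  -- for each coordinate, `A k` or `B k` is contained in `C t0 k`
  have hk : ∀ k, A k ⊆ C t0 k ∨ B k ⊆ C t0 k := by
    intro k
    by_cases hk1 : ∃ s, s < t0 ∧ ¬ C s k ⊆ C (s + 1) k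
    · obtain ⟨s, hs, hdel⟩ := hk1
      right
      have : C q k ⊆ C t0 k := by
        refine chain_subset_rev (fun t => C t k) t0 q ht0q (fun t ht htq => ?_)
        exact (hS k).1 s t (le_of_lt (lt_of_lt_of_le hs ht)) htq hdel
      rwa [hCq] at this
    · push_neg at hk1
      left
      have : C 0 k ⊆ C t0 k :=
        chain_subset (fun t => C t k) 0 t0 (Nat.zero_le _)
          (fun t _ ht => hk1 t ht)
      rwa [hC0] at this
  -- shrink `C t0` to an eliminator
  refine ⟨fun k => if k = j then A j ∪ B j else if A k ⊆ C t0 k then A k else B k,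
    ?_, by simp, ?_⟩
  · refine hclosed (C t0) (hmem t0 ht0q) _ (fun k => ?_) (fun k => ?_)
    · by_cases hkj : k = j
      · simp only [hkj, if_pos rfl]
        exact Finset.Nonempty.inl (hM A hA j)
      · simp only [if_neg hkj]
        split
        · exact hM A hA k
        · exact hM B hB k
    · by_cases hkj : k = j
      · subst hkj; rw [hjeq]; simp
      · simp only [if_neg hkj]
        split
        · assumption
        · rcases hk k with h | h
          · exact absurd h (by assumption)
          · exact h
  · intro k
    by_cases hkj : k = j
    · subst hkj
      simp only [if_pos rfl]
      exact Or.inr (Or.inr rfl)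
    · simp only [if_neg hkj]
      split
      · exact Or.inl rfl
      · exact Or.inr (Or.inl rfl)

end TOMPaper
end

section
/- Let M be a tropical oriented matroid with parameters (n,d), and let A=(A_1,…,A_n)∈M be a type which, viewed as a subgraph of K_{n,d}, contains no cycle. Choose i∈[n] with |A_i|>1 and any k∈A_i, and let A' be obtained from A by deleting k from A_i. Then A'∈M. -/
open scoped Classical

namespace TOMPaper

variable {n d : ℕ}

section AuxDelete

variable {n d : ℕ}

private lemma adjAux_symm (B : Fin n → Finset (Fin d)) : Symmetric (Adj B) := by
  intro u v h
  cases u <;> cases v <;> simp_all [Adj]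

/-- The simple graph on `Fin n ⊕ Fin d` encoded by `B`. -/
private def graphOf (B : Fin n → Finset (Fin d)) : SimpleGraph (Fin n ⊕ Fin d) where
  Adj := Adj B
  symm := ⟨fun _ _ h => adjAux_symm B h⟩
  loopless := ⟨by intro u h; cases u <;> exact h⟩

private lemma getVert_injOn_aux {V : Type*} {G : SimpleGraph V} :
    ∀ {u v : V} (p : G.Walk u v), p.IsPath → ∀ s t, s ≤ p.length → t ≤ p.length →
      p.getVert s = p.getVert t → s = t := by
  intro u v p
  induction p with
  | nil => intro _ s t hs ht _; simp only [SimpleGraph.Walk.length_nil] at hs ht; omega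
  | @cons a b c h p ih =>
    intro hp s t hs ht heq
    rw [SimpleGraph.Walk.cons_isPath_iff] at hp
    simp only [SimpleGraph.Walk.length_cons] at hs ht
    have hmem : ∀ r, r ≤ p.length → p.getVert r ≠ a := by
      intro r hr hcon
      exact hp.2 (SimpleGraph.Walk.mem_support_iff_exists_getVert.2 ⟨r, hcon, hr⟩)
    match s, t with
    | 0, 0 => rfl
    | 0, t + 1 =>
      rw [SimpleGraph.Walk.getVert_zero, SimpleGraph.Walk.getVert_cons_succ] at heq
      exact absurd heq.symm (hmem t (by omega))
    | s + 1, 0 =>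
      rw [SimpleGraph.Walk.getVert_zero, SimpleGraph.Walk.getVert_cons_succ] at heq
      exact absurd heq (hmem s (by omega))
    | s + 1, t + 1 =>
      rw [SimpleGraph.Walk.getVert_cons_succ, SimpleGraph.Walk.getVert_cons_succ] at heq
      have := ih hp.1 s t (by omega) (by omega) heq
      omega

private lemma hasCycle_of_walk (A B : Fin n → Finset (Fin d))
    (hBsub : ∀ i' j', j' ∈ B i' → j' ∈ A i') (i : Fin n) (k : Fin d)
    (hk : k ∈ A i) (hBik : k ∉ B i)
    (q : (graphOf B).Walk (Sum.inl i) (Sum.inr k)) (hq : q.IsPath) :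
    HasCycle A := by
  classical
  -- parity of vertices along the walk
  have hpar : ∀ t, t ≤ q.length →
      (t % 2 = 0 → ∃ x, q.getVert t = Sum.inl x) ∧
      (t % 2 = 1 → ∃ y, q.getVert t = Sum.inr y) := by
    intro t
    induction t with
    | zero =>
      intro _
      exact ⟨fun _ => ⟨i, by simp⟩, fun h => by omega⟩
    | succ t ih =>
      intro ht
      have h1 := ih (by omega)
      have hadj := q.adj_getVert_succ (show t < q.length by omega)
      constructor
      · intro he
        obtain ⟨y, hy⟩ := h1.2 (by omega)
        rw [hy] at hadj
        cases hgv : q.getVert (t + 1) with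
        | inl x => exact ⟨x, rfl⟩
        | inr y' => rw [hgv] at hadj; exact hadj.elim
      · intro he
        obtain ⟨x, hx⟩ := h1.1 (by omega)
        rw [hx] at hadj
        cases hgv : q.getVert (t + 1) with
        | inl x' => rw [hgv] at hadj; exact hadj.elim
        | inr y => exact ⟨y, rfl⟩
  have hodd : q.length % 2 = 1 := by
    rcases Nat.mod_two_eq_zero_or_one q.length with h | h
    · obtain ⟨x, hx⟩ := (hpar q.length le_rfl).1 h
      rw [SimpleGraph.Walk.getVert_length] at hx
      exact absurd hx (by simp)
    · exact h
  obtain ⟨m, hlen⟩ : ∃ m, q.length = 2 * m + 1 := ⟨q.length / 2, by omega⟩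
  -- m ≥ 1
  have hm : 1 ≤ m := by
    by_contra hcon
    have hm0 : q.length = 1 := by omega
    have hadj := q.adj_getVert_succ (show 0 < q.length by omega)
    rw [SimpleGraph.Walk.getVert_zero] at hadj
    have : q.getVert 1 = Sum.inr k := by rw [← hm0, SimpleGraph.Walk.getVert_length]
    rw [this] at hadj
    exact hBik hadj
  set a : ℕ → Fin n := fun s => Sum.elim id (fun _ => i) (q.getVert (2 * s)) with ha_def
  set b : ℕ → Fin d := fun s => Sum.elim (fun _ => k) id (q.getVert (2 * s + 1)) with hb_def
  have ha : ∀ s, s ≤ m → q.getVert (2 * s) = Sum.inl (a s) := by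
    intro s hs
    obtain ⟨x, hx⟩ := (hpar (2 * s) (by omega)).1 (by omega)
    rw [hx]; simp [ha_def, hx]
  have hb : ∀ s, s ≤ m → q.getVert (2 * s + 1) = Sum.inr (b s) := by
    intro s hs
    obtain ⟨y, hy⟩ := (hpar (2 * s + 1) (by omega)).2 (by omega)
    rw [hy]; simp [hb_def, hy]
  have hab : ∀ s, s ≤ m → b s ∈ B (a s) := by
    intro s hs
    have hadj := q.adj_getVert_succ (show 2 * s < q.length by omega)
    rw [ha s hs, hb s hs] at hadj
    exact hadj
  have hba : ∀ s, s < m → b s ∈ B (a (s + 1)) := by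
    intro s hs
    have hadj := q.adj_getVert_succ (show 2 * s + 1 < q.length by omega)
    have h2 : 2 * s + 1 + 1 = 2 * (s + 1) := by omega
    rw [hb s (by omega), h2, ha (s + 1) (by omega)] at hadj
    exact hadj
  have ha0 : a 0 = i := by
    have : q.getVert (2 * 0) = Sum.inl i := by simp
    have h := ha 0 (by omega)
    rw [this] at h
    exact (Sum.inl.inj h).symm
  have hbm : b m = k := by
    have : q.getVert (2 * m + 1) = Sum.inr k := by
      rw [← hlen, SimpleGraph.Walk.getVert_length]
    have h := hb m le_rfl
    rw [this] at h
    exact (Sum.inr.inj h).symm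
  obtain ⟨m', rfl⟩ : ∃ m', m = m' + 1 := ⟨m - 1, by omega⟩
  refine ⟨m', fun s => a s.val, fun s => b s.val, ?_, ?_, ?_⟩
  · intro s t hst
    have hs := s.isLt
    have htt := t.isLt
    have : (Sum.inl (a s.val) : Fin n ⊕ Fin d) = Sum.inl (a t.val) := by
      simp only at hst; rw [hst]
    rw [← ha s.val (by omega), ← ha t.val (by omega)] at this
    have := getVert_injOn_aux q hq _ _ (by omega) (by omega) this
    exact Fin.ext (by omega)
  · intro s t hst
    have hs := s.isLt
    have htt := t.isLt
    have : (Sum.inr (b s.val) : Fin n ⊕ Fin d) = Sum.inr (b t.val) := by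
      simp only at hst; rw [hst]
    rw [← hb s.val (by omega), ← hb t.val (by omega)] at this
    have := getVert_injOn_aux q hq _ _ (by omega) (by omega) this
    exact Fin.ext (by omega)
  · intro s
    have hs := s.isLt
    refine ⟨hBsub _ _ (hab s.val (by omega)), ?_⟩
    have hadd : (s + 1).val = (s.val + (1 : Fin (m' + 2)).val) % (m' + 2) :=
      congrArg Fin.val (Fin.add_def s 1)
    by_cases hsm : s.val = m' + 1
    · have hs1 : (s + 1).val = 0 := by rw [hadd, Fin.val_one, hsm]; simp
      show b s.val ∈ A (a (s + 1).val)
      rw [hs1, ha0, hsm, hbm]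
      exact hk
    · have hs1 : (s + 1).val = s.val + 1 := by
        rw [hadd, Fin.val_one]
        exact Nat.mod_eq_of_lt (by omega)
      show b s.val ∈ A (a (s + 1).val)
      rw [hs1]
      exact hBsub _ _ (hba s.val (by omega))

private lemma hasCycle_of_reach (A : Fin n → Finset (Fin d)) (i : Fin n) (k : Fin d)
    (hk : k ∈ A i) (j : Fin d) (hj : j ∈ A i) (hjk : j ≠ k)
    (hreach : Relation.ReflTransGen (Adj (DeleteEdge A i k)) (Sum.inr j) (Sum.inr k)) :
    HasCycle A := by
  classical
  set B := DeleteEdge A i k with hB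
  have hBsub : ∀ i' j', j' ∈ B i' → j' ∈ A i' := by
    intro i' j' h
    by_cases hii : i' = i
    · subst hii
      rw [hB, DeleteEdge, Function.update_self] at h
      exact Finset.mem_of_mem_erase h
    · rwa [hB, DeleteEdge, Function.update_of_ne hii] at h
  have hBik : k ∉ B i := by
    rw [hB, DeleteEdge, Function.update_self]
    exact Finset.notMem_erase k (A i)
  have hreach' : (graphOf B).Reachable (Sum.inr j) (Sum.inr k) :=
    (SimpleGraph.reachable_iff_reflTransGen _ _).2 hreach
  obtain ⟨w⟩ := hreach'
  obtain ⟨p, hp⟩ := w.toPath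
  rcases Classical.em (Sum.inl i ∈ p.support) with hmem | hmem
  · exact hasCycle_of_walk A B hBsub i k hk hBik (p.dropUntil _ hmem) (hp.dropUntil hmem)
  · have hadj : (graphOf B).Adj (Sum.inl i) (Sum.inr j) := by
      show j ∈ B i
      rw [hB, DeleteEdge, Function.update_self]
      exact Finset.mem_erase.2 ⟨hjk, hj⟩
    exact hasCycle_of_walk A B hBsub i k hk hBik (SimpleGraph.Walk.cons hadj p)
      (hp.cons hmem)

end AuxDelete

/-- in a tropical oriented matroid, deleting one element from a
non-singleton coordinate of a cycle-free type yields again a type of the matroid. -/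
theorem surrounding_delete_element {n d : ℕ}
    (M : Set (Fin n → Finset (Fin d))) (hM : IsTOM M)
    (A : Fin n → Finset (Fin d)) (hA : A ∈ M) (hacyc : ¬ HasCycle A)
    (i : Fin n) (hi : 1 < (A i).card) (k : Fin d) (hk : k ∈ A i) :
    Function.update A i ((A i).erase k) ∈ M := by
  classical
  obtain ⟨hnonempty, hbd, helim, hcomp, hsur⟩ := hM
  set B := DeleteEdge A i k with hB
  set S : Finset (Fin d) :=
    Finset.univ.filter (fun j => Relation.ReflTransGen (Adj B) (Sum.inr j) (Sum.inr k))
    with hSdef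
  have hmemS : ∀ j : Fin d,
      j ∈ S ↔ Relation.ReflTransGen (Adj B) (Sum.inr j) (Sum.inr k) := by
    intro j; simp [hSdef]
  have hkS : k ∈ S := (hmemS k).2 Relation.ReflTransGen.refl
  -- elements of A i in S are exactly k
  have hS_Ai : ∀ j ∈ A i, (j ∈ S ↔ j = k) := by
    intro j hj
    constructor
    · intro hjS
      by_contra hjk
      exact hacyc (hasCycle_of_reach A i k hk j hj hjk ((hmemS j).1 hjS))
    · intro h; subst h; exact hkS
  obtain ⟨j0, hj0A, hj0k⟩ := Finset.exists_mem_ne hi k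
  have hj0S : j0 ∉ S := fun h => hj0k ((hS_Ai j0 hj0A).1 h)
  -- every other coordinate lies entirely in S or entirely outside S
  have hKey2 : ∀ i' : Fin n, i' ≠ i → (∀ j' ∈ A i', j' ∈ S) ∨ (∀ j' ∈ A i', j' ∉ S) := by
    intro i' hii
    have hBi' : B i' = A i' := by rw [hB, DeleteEdge, Function.update_of_ne hii]
    by_cases hex : ∃ j' ∈ A i', j' ∈ S
    · left
      obtain ⟨j', hj'A, hj'S⟩ := hex
      intro j'' hj''
      refine (hmemS j'').2 ?_
      have h1 : Adj B (Sum.inr j'') (Sum.inl i') := by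
        show j'' ∈ B i'; rw [hBi']; exact hj''
      have h2 : Adj B (Sum.inl i') (Sum.inr j') := by
        show j' ∈ B i'; rw [hBi']; exact hj'A
      exact Relation.ReflTransGen.head h1 (Relation.ReflTransGen.head h2 ((hmemS j').1 hj'S))
    · right
      intro j' hj' hj'S
      exact hex ⟨j', hj', hj'S⟩
  -- the ordered partition (S, Sᶜ)
  have hfin2 : ∀ s : Fin 2, s = 0 ∨ s = 1 := by decide
  set P : Fin 2 → Finset (Fin d) := fun s => if s = 0 then S else Sᶜ with hPdef
  have hP0 : P 0 = S := by simp [hPdef]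
  have hP1 : P 1 = Sᶜ := by simp [hPdef]
  have hpart : IsOrderedPartition P := by
    refine ⟨?_, ?_, ?_⟩
    · intro s
      rcases hfin2 s with rfl | rfl
      · rw [hP0]; exact ⟨k, hkS⟩
      · rw [hP1]; exact ⟨j0, Finset.mem_compl.2 hj0S⟩
    · intro s t hst
      rcases hfin2 s with rfl | rfl <;> rcases hfin2 t with rfl | rfl
      · exact absurd rfl hst
      · rw [hP0, hP1]; exact disjoint_compl_right
      · rw [hP0, hP1]; exact disjoint_compl_left
      · exact absurd rfl hst
    · intro j
      by_cases h : j ∈ S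
      · exact ⟨0, by rw [hP0]; exact h⟩
      · exact ⟨1, by rw [hP1]; exact Finset.mem_compl.2 h⟩
  set mfun : Fin n → Fin 2 := fun i' => if (A i' ∩ Sᶜ).Nonempty then 1 else 0 with hmdef
  have hhyp : ∀ i', (A i' ∩ P (mfun i')).Nonempty ∧
      ∀ s, (A i' ∩ P s).Nonempty → s ≤ mfun i' := by
    intro i'
    by_cases h : (A i' ∩ Sᶜ).Nonempty
    · have hm1 : mfun i' = 1 := by rw [hmdef]; simp [h]
      rw [hm1, hP1]
      refine ⟨h, ?_⟩
      intro s _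
      rcases hfin2 s with rfl | rfl
      · exact Fin.zero_le 1
      · exact le_refl 1
    · have hm0 : mfun i' = 0 := by rw [hmdef]; simp [h]
      rw [hm0, hP0]
      have hsub : A i' ⊆ S := by
        intro x hx
        by_contra hxS
        exact h ⟨x, Finset.mem_inter.2 ⟨hx, Finset.mem_compl.2 hxS⟩⟩
      have hne : (A i').Nonempty := hnonempty A hA i'
      refine ⟨?_, ?_⟩
      · obtain ⟨x, hx⟩ := hne
        exact ⟨x, Finset.mem_inter.2 ⟨hx, hsub hx⟩⟩
      · intro s hs
        rcases hfin2 s with rfl | rfl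
        · exact le_refl 0
        · rw [hP1] at hs; exact absurd hs h
  have hres := hsur A hA 2 P hpart mfun hhyp
  have heq : (fun i' => A i' ∩ P (mfun i')) = Function.update A i ((A i).erase k) := by
    funext i'
    by_cases hii : i' = i
    · subst hii
      have h : (A i' ∩ Sᶜ).Nonempty :=
        ⟨j0, Finset.mem_inter.2 ⟨hj0A, Finset.mem_compl.2 hj0S⟩⟩
      have hm1 : mfun i' = 1 := by rw [hmdef]; simp [h]
      rw [hm1, hP1, Function.update_self]
      ext j
      simp only [Finset.mem_inter, Finset.mem_compl, Finset.mem_erase]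
      constructor
      · rintro ⟨hjA, hjS⟩
        exact ⟨fun hcon => hjS (hcon ▸ hkS), hjA⟩
      · rintro ⟨hjk, hjA⟩
        exact ⟨hjA, fun hjS => hjk ((hS_Ai j hjA).1 hjS)⟩
    · rw [Function.update_of_ne hii]
      rcases hKey2 i' hii with hsub | hdis
      · have h : ¬ (A i' ∩ Sᶜ).Nonempty := by
          rintro ⟨x, hx⟩
          rw [Finset.mem_inter, Finset.mem_compl] at hx
          exact hx.2 (hsub x hx.1)
        have hm0 : mfun i' = 0 := by rw [hmdef]; simp [h]
        rw [hm0, hP0]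
        exact Finset.inter_eq_left.2 hsub
      · have h : (A i' ∩ Sᶜ).Nonempty := by
          obtain ⟨x, hx⟩ := hnonempty A hA i'
          exact ⟨x, Finset.mem_inter.2 ⟨hx, Finset.mem_compl.2 (hdis x hx)⟩⟩
        have hm1 : mfun i' = 1 := by rw [hmdef]; simp [h]
        rw [hm1, hP1]
        exact Finset.inter_eq_left.2 fun x hx => Finset.mem_compl.2 (hdis x hx)
  rwa [heq] at hres

end TOMPaper
end

section
/- Let T=(T_1,…,T_n) be a spanning tree of K_{n,d} and let e be an edge of T whose left endpoint has degree at least 2 in T. Let I_e ⊆ [d] be the set of right vertices lying in the connected component of T∖e not containing the right vertex d, and let (J_1,…,J_n) be the coordinates of T∖e (so each J_k is nonempty). Then every point x in the Minkowski sum Δ_{J_1}+⋯+Δ_{J_n} ⊂ ℝ^d satisfies Σ_{j∈I_e} x_j = c, where c is the integer #{k∈[n] : J_k ⊆ I_e}; in particular, the face of the cell Δ_{T_1}+⋯+Δ_{T_n} corresponding to T∖e lies in the hyperplane Σ_{j∈I_e} x_j = c. -/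
open scoped Classical

namespace TOMPaper

variable {n d : ℕ}

/-- the facet of a fine cell obtained by deleting an edge `e = (i₀, j₀)`
(whose left endpoint has degree at least `2`) lies in the hyperplane
`Σ_{j ∈ I_e} x j = #{k : J k ⊆ I_e}`. -/
theorem facet_in_hyperplane {n d : ℕ} (hd : 0 < d)
    (T : Fin n → Finset (Fin d)) (hT : IsSpanningTree T)
    (i0 : Fin n) (j0 : Fin d) (he : j0 ∈ T i0) (hdeg : 2 ≤ (T i0).card)
    (Ie : Finset (Fin d))
    (hIe : ∀ j : Fin d, j ∈ Ie ↔
      ¬ Relation.ReflTransGen (Adj (DeleteEdge T i0 j0))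
        (Sum.inr j) (Sum.inr ⟨d - 1, by omega⟩)) :
    ∀ x ∈ cell (DeleteEdge T i0 j0),
      ∑ j ∈ Ie, x j =
        ((Finset.univ.filter (fun k : Fin n => DeleteEdge T i0 j0 k ⊆ Ie)).card : ℝ) := by
  intro x hx
  obtain ⟨y, hy, rfl⟩ := hx
  set J := DeleteEdge T i0 j0 with hJ
  -- key: value of the linear functional on a simplex
  have key : ∀ (I : Finset (Fin d)) (c : ℝ),
      (∀ i ∈ I, ((if i ∈ Ie then (1:ℝ) else 0)) = c) →
      ∀ z ∈ simplexOf I, ∑ j ∈ Ie, z j = c := by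
    intro I c hc z hz
    have hconv : Convex ℝ {w : Fin d → ℝ | ∑ j ∈ Ie, w j = c} := by
      intro a ha b hb s t hs ht hst
      simp only [Set.mem_setOf_eq] at ha hb ⊢
      have : ∑ j ∈ Ie, (s • a + t • b) j
          = s * ∑ j ∈ Ie, a j + t * ∑ j ∈ Ie, b j := by
        simp [Finset.mul_sum, Finset.sum_add_distrib]
      rw [this, ha, hb]
      linear_combination c * hst
    have hsub : simplexOf I ⊆ {w : Fin d → ℝ | ∑ j ∈ Ie, w j = c} := by
      refine convexHull_min ?_ hconv
      rintro w ⟨i, hi, rfl⟩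
      simp only [Set.mem_setOf_eq, Pi.single_apply]
      rw [Finset.sum_ite_eq' Ie i (fun _ => (1:ℝ))]
      exact hc i hi
    exact hsub hz
  have hval : ∀ i : Fin n, ∑ j ∈ Ie, y i j = if J i ⊆ Ie then (1:ℝ) else 0 := by
    intro i
    by_cases hsub : J i ⊆ Ie
    · rw [if_pos hsub]
      exact key (J i) 1 (fun i' hi' => if_pos (hsub hi')) _ (hy i)
    · rw [if_neg hsub]
      obtain ⟨j', hj'I, hj'⟩ := Finset.not_subset.mp hsub
      refine key (J i) 0 ?_ _ (hy i)
      intro i' hi'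
      rw [if_neg]
      intro hmem
      have hreach : Relation.ReflTransGen (Adj J) (Sum.inr i') (Sum.inr j') :=
        Relation.ReflTransGen.head (show Adj J (Sum.inr i') (Sum.inl i) from hi')
          (Relation.ReflTransGen.single (show Adj J (Sum.inl i) (Sum.inr j') from hj'I))
      have h1 := (hIe i').mp hmem
      have h2 : Relation.ReflTransGen (Adj J) (Sum.inr j')
          (Sum.inr (⟨d - 1, by omega⟩ : Fin d)) := by
        by_contra h
        exact hj' ((hIe j').mpr h)
      exact h1 (hreach.trans h2)
  have hsum : ∑ j ∈ Ie, (∑ i, y i) j = ∑ i : Fin n, ∑ j ∈ Ie, y i j := by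
    simp only [Finset.sum_apply]
    rw [Finset.sum_comm]
  rw [hsum]
  rw [Finset.sum_congr rfl (fun i _ => hval i)]
  rw [Finset.sum_boole]

end TOMPaper
end

section
/- Let T be a spanning tree of K_{n,d}. Let E' be the set of edges of T whose left endpoint has degree at least 2 in T, and for e∈E' let I_e ⊆ [d]∖{d} be the set of right vertices lying in the connected component of T∖e not containing the right vertex d. Then the {0,1}-matrix Y with rows indexed by E' and columns indexed by [d−1], defined by Y_{e,j}=1 if j∈I_e and Y_{e,j}=0 otherwise, is totally unimodular. -/
open scoped Classical

namespace TOMPaper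

variable {n d : ℕ}

/-- A family of finsets is laminar: any two are nested or disjoint. -/
def LaminarFam {ι γ : Type*} (J : ι → Finset γ) : Prop :=
  ∀ p q, J p ⊆ J q ∨ J q ⊆ J p ∨ ∀ x, x ∈ J p → x ∉ J q

lemma det_laminar : ∀ (k : ℕ) (J : Fin k → Finset (Fin k)), LaminarFam J →
    (Matrix.of fun p q => if q ∈ J p then (1 : ℚ) else 0).det = 0 ∨
    (Matrix.of fun p q => if q ∈ J p then (1 : ℚ) else 0).det = 1 ∨
    (Matrix.of fun p q => if q ∈ J p then (1 : ℚ) else 0).det = -1 := by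
  intro k
  induction k with
  | zero => intro J _; right; left; exact Matrix.det_isEmpty
  | succ k ih =>
    intro J hJ
    set M : Matrix (Fin (k+1)) (Fin (k+1)) ℚ :=
      Matrix.of fun p q => if q ∈ J p then (1 : ℚ) else 0 with hM
    by_cases hemp : ∃ p, J p = ∅
    · obtain ⟨p, hp⟩ := hemp
      left
      exact Matrix.det_eq_zero_of_row_eq_zero p (fun q => by simp [hM, hp])
    push_neg at hemp
    -- choose a row with minimal card
    obtain ⟨r, -, hr⟩ := Finset.exists_min_image Finset.univ (fun p => (J p).card)
      ⟨0, Finset.mem_univ 0⟩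
    have hmin : ∀ p, J r ⊆ J p ∨ ∀ x, x ∈ J p → x ∉ J r := by
      intro p
      rcases hJ r p with h | h | h
      · exact Or.inl h
      · left
        rw [Finset.eq_of_subset_of_card_le h (hr p (Finset.mem_univ p))]
      · right; intro x hx hxr; exact h x hxr hx
    rcases lt_or_ge 1 (J r).card with hcard | hcard
    · -- two equal columns
      obtain ⟨c, hc, c', hc', hne⟩ := Finset.one_lt_card.mp hcard
      left
      refine Matrix.det_zero_of_column_eq hne (fun p => ?_)
      rcases hmin p with h | h
      · simp [hM, h hc, h hc']
      · show (if c ∈ J p then (1:ℚ) else 0) = if c' ∈ J p then (1:ℚ) else 0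
        rw [if_neg (fun hx => (h c hx) hc), if_neg (fun hx => (h c' hx) hc')]
    · -- J r is a singleton {c}
      have hone : (J r).card = 1 := le_antisymm hcard (Finset.one_le_card.mpr (hemp r))
      obtain ⟨c, hc⟩ := Finset.card_eq_one.mp hone
      have hrow : ∀ q, M r q = if q = c then 1 else 0 := by
        intro q; simp [hM, hc]
      rw [Matrix.det_succ_row M r]
      rw [Finset.sum_eq_single c ?h₀ (by simp)]
      case h₀ =>
        intro q _ hq
        rw [hrow q, if_neg hq]; ring
      rw [hrow c, if_pos rfl, mul_one]
      set J' : Fin k → Finset (Fin k) := fun p =>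
        Finset.univ.filter (fun q => c.succAbove q ∈ J (r.succAbove p)) with hJ'
      have hsub : M.submatrix r.succAbove c.succAbove =
          Matrix.of fun p q => if q ∈ J' p then (1 : ℚ) else 0 := by
        ext p q
        simp [hM, hJ', Matrix.submatrix_apply]
      have hlam : LaminarFam J' := by
        intro p q
        rcases hJ (r.succAbove p) (r.succAbove q) with h | h | h
        · left; intro x hx
          simp only [hJ', Finset.mem_filter, Finset.mem_univ, true_and] at hx ⊢
          exact h hx
        · right; left; intro x hx
          simp only [hJ', Finset.mem_filter, Finset.mem_univ, true_and] at hx ⊢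
          exact h hx
        · right; right; intro x hx hx'
          simp only [hJ', Finset.mem_filter, Finset.mem_univ, true_and] at hx hx'
          exact h _ hx hx'
      rw [hsub]
      rcases Nat.even_or_odd ((r : ℕ) + (c : ℕ)) with he | ho
      · rw [he.neg_one_pow]
        rcases ih J' hlam with h | h | h <;> rw [h] <;> norm_num
      · rw [ho.neg_one_pow]
        rcases ih J' hlam with h | h | h <;> rw [h] <;> norm_num

/-- Reachability in the subgraph encoded by `S`. -/
abbrev Rch (S : Fin n → Finset (Fin d)) (u w : Fin n ⊕ Fin d) : Prop :=
  Relation.ReflTransGen (Adj S) u w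

lemma adj_symm {S : Fin n → Finset (Fin d)} {u w} (h : Adj S u w) : Adj S w u := by
  cases u <;> cases w <;> simp_all [Adj]

lemma rch_symm {S : Fin n → Finset (Fin d)} {u w} (h : Rch S u w) : Rch S w u := by
  induction h with
  | refl => exact .refl
  | tail _ hstep ih =>
      exact Relation.ReflTransGen.trans (Relation.ReflTransGen.single (adj_symm hstep)) ih

lemma adj_mono {S S' : Fin n → Finset (Fin d)} (hS : ∀ i, S i ⊆ S' i) {u w}
    (h : Adj S u w) : Adj S' u w := by
  cases u <;> cases w <;> simp_all [Adj]
  · exact hS _ h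
  · exact hS _ h

lemma rch_mono {S S' : Fin n → Finset (Fin d)} (hS : ∀ i, S i ⊆ S' i) {u w}
    (h : Rch S u w) : Rch S' u w :=
  by
  induction h with
  | refl => exact .refl
  | tail _ hs ih => exact ih.tail (adj_mono hS hs)

lemma mem_deleteEdge {T : Fin n → Finset (Fin d)} {i i' : Fin n} {j j' : Fin d} :
    j' ∈ DeleteEdge T i j i' ↔ j' ∈ T i' ∧ ¬(i' = i ∧ j' = j) := by
  unfold DeleteEdge
  rcases eq_or_ne i' i with rfl | h
  · simp only [Function.update_self, Finset.mem_erase]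
    tauto
  · simp [Function.update_of_ne h, h]

lemma deleteEdge_subset {T : Fin n → Finset (Fin d)} {i : Fin n} {j : Fin d} :
    ∀ i', DeleteEdge T i j i' ⊆ T i' := fun i' j' hj' => (mem_deleteEdge.mp hj').1

lemma deleteEdge_comm {T : Fin n → Finset (Fin d)} {i i' : Fin n} {j j' : Fin d} :
    DeleteEdge (DeleteEdge T i j) i' j' = DeleteEdge (DeleteEdge T i' j') i j := by
  funext i''
  ext j''
  simp only [mem_deleteEdge]
  tauto

/-- Merge lemma: a path in `T` either avoids the edge `(i,j)` or decomposes at it. -/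
lemma rch_merge {T : Fin n → Finset (Fin d)} {i : Fin n} {j : Fin d} {u w : Fin n ⊕ Fin d}
    (h : Rch T u w) :
    Rch (DeleteEdge T i j) u w ∨
    (Rch (DeleteEdge T i j) u (Sum.inl i) ∧ Rch (DeleteEdge T i j) (Sum.inr j) w) ∨
    (Rch (DeleteEdge T i j) u (Sum.inr j) ∧ Rch (DeleteEdge T i j) (Sum.inl i) w) := by
  set T' := DeleteEdge T i j with hT'
  induction h with
  | refl => left; exact .refl
  | @tail x y hux hstep ih =>
      by_cases hxy : Adj T' x y
      · rcases ih with h1 | ⟨h1, h2⟩ | ⟨h1, h2⟩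
        · left; exact h1.tail hxy
        · right; left; exact ⟨h1, h2.tail hxy⟩
        · right; right; exact ⟨h1, h2.tail hxy⟩
      · -- the step uses the deleted edge
        have hxy' : (x = Sum.inl i ∧ y = Sum.inr j) ∨ (x = Sum.inr j ∧ y = Sum.inl i) := by
          cases x with
          | inl a => cases y with
            | inl b => exact absurd hstep (by simp [Adj])
            | inr b =>
                have hb : b ∈ T a := hstep
                left
                have : ¬ b ∈ T' a := hxy
                rw [hT', mem_deleteEdge] at this
                push_neg at this
                obtain ⟨ha, hbj⟩ := this hb
                exact ⟨by rw [ha], by rw [hbj]⟩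
          | inr a => cases y with
            | inl b =>
                have hb : a ∈ T b := hstep
                right
                have : ¬ a ∈ T' b := hxy
                rw [hT', mem_deleteEdge] at this
                push_neg at this
                obtain ⟨hb', haj⟩ := this hb
                exact ⟨by rw [haj], by rw [hb']⟩
            | inr b => exact absurd hstep (by simp [Adj])
        rcases hxy' with ⟨rfl, rfl⟩ | ⟨rfl, rfl⟩
        · -- step inl i → inr j
          rcases ih with h1 | ⟨h1, h2⟩ | ⟨h1, h2⟩
          · right; left; exact ⟨h1, .refl⟩
          · right; left; exact ⟨h1, .refl⟩
          · left; exact h1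
        · -- step inr j → inl i
          rcases ih with h1 | ⟨h1, h2⟩ | ⟨h1, h2⟩
          · right; right; exact ⟨h1, .refl⟩
          · left; exact h1
          · right; right; exact ⟨h1, .refl⟩


/-- Paths of a fixed length. -/
def RN (S : Fin n → Finset (Fin d)) : ℕ → Fin n ⊕ Fin d → Fin n ⊕ Fin d → Prop
  | 0, u, w => u = w
  | (k+1), u, w => ∃ x, Adj S u x ∧ RN S k x w

lemma rn_snoc {S : Fin n → Finset (Fin d)} :
    ∀ {k : ℕ} {u w x : Fin n ⊕ Fin d}, RN S k u w → Adj S w x → RN S (k+1) u x := by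
  intro k
  induction k with
  | zero => intro u w x h hadj; cases h; exact ⟨x, hadj, rfl⟩
  | succ k ih =>
      intro u w x h hadj
      obtain ⟨y, hy, hrest⟩ := h
      exact ⟨y, hy, ih hrest hadj⟩

lemma rch_iff_rn {S : Fin n → Finset (Fin d)} {u w : Fin n ⊕ Fin d} :
    Rch S u w ↔ ∃ k, RN S k u w := by
  constructor
  · intro h
    induction h with
    | refl => exact ⟨0, rfl⟩
    | tail _ hstep ih =>
        obtain ⟨k, hk⟩ := ih
        exact ⟨k+1, rn_snoc hk hstep⟩
  · rintro ⟨k, hk⟩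
    induction k generalizing u with
    | zero => cases hk; exact .refl
    | succ k ih =>
        obtain ⟨x, hx, hrest⟩ := hk
        exact Relation.ReflTransGen.head hx (ih hrest)

/-- A connected graph on `n + d` vertices has at least `n + d - 1` edges. -/
lemma card_bound {S : Fin n → Finset (Fin d)} {v0 : Fin n ⊕ Fin d}
    (hconn : ∀ u, Rch S u v0) : n + d - 1 ≤ ∑ i : Fin n, (S i).card := by
  classical
  have hex : ∀ u : Fin n ⊕ Fin d, ∃ k, RN S k u v0 := fun u => rch_iff_rn.mp (hconn u)
  set dist : Fin n ⊕ Fin d → ℕ := fun u => Nat.find (hex u) with hdist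
  have hdist_spec : ∀ u, RN S (dist u) u v0 := fun u => Nat.find_spec (hex u)
  have hparent : ∀ u, u ≠ v0 → ∃ x, Adj S u x ∧ dist x < dist u := by
    intro u hu
    have h1 := hdist_spec u
    rcases hk : dist u with _ | k
    · rw [hk] at h1; exact absurd h1 hu
    · rw [hk] at h1
      obtain ⟨x, hx, hrest⟩ := h1
      refine ⟨x, hx, ?_⟩
      have : dist x ≤ k := Nat.find_le hrest
      omega
  choose par hpar hparlt using hparent
  -- the edge assigned to each non-root vertex
  have hF : ∀ u (hu : u ≠ v0), ∃ p : Fin n × Fin d, p.2 ∈ S p.1 ∧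
      ((u = Sum.inl p.1 ∧ par u hu = Sum.inr p.2) ∨
       (u = Sum.inr p.2 ∧ par u hu = Sum.inl p.1)) := by
    intro u hu
    have hadj := hpar u hu
    cases u with
    | inl a =>
        rcases hy : par (Sum.inl a) hu with b | b
        · rw [hy] at hadj; exact absurd hadj (by simp [Adj])
        · rw [hy] at hadj
          exact ⟨(a, b), hadj, Or.inl ⟨rfl, by simp [hy]⟩⟩
    | inr a =>
        rcases hy : par (Sum.inr a) hu with b | b
        · rw [hy] at hadj
          exact ⟨(b, a), hadj, Or.inr ⟨rfl, by simp [hy]⟩⟩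
        · rw [hy] at hadj; exact absurd hadj (by simp [Adj])
  choose F hF1 hF2 using hF
  -- count
  have hcardV : (Finset.univ.erase v0 : Finset (Fin n ⊕ Fin d)).card = n + d - 1 := by
    rw [Finset.card_erase_of_mem (Finset.mem_univ v0), Finset.card_univ]
    simp [Fintype.card_sum]
  have hE : (Finset.univ.filter (fun p : Fin n × Fin d => p.2 ∈ S p.1)).card
      = ∑ i : Fin n, (S i).card := by
    rw [Finset.card_filter, ← Finset.univ_product_univ, Finset.sum_product]
    refine Finset.sum_congr rfl fun i _ => ?_
    simp [Finset.sum_ite_mem]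
  rw [← hcardV, ← hE]
  rcases Finset.eq_empty_or_nonempty (Finset.univ.erase v0 : Finset (Fin n ⊕ Fin d)) with
    h0 | ⟨u0, hu0⟩
  · rw [h0]; simp
  have hu0' : u0 ≠ v0 := (Finset.mem_erase.mp hu0).1
  have p0 : Fin n × Fin d := F u0 hu0'
  refine Finset.card_le_card_of_injOn (fun u => if hu : u ≠ v0 then F u hu else p0)
    ?_ ?_
  · intro u hu
    have hu' : u ≠ v0 := (Finset.mem_erase.mp hu).1
    simp only [dif_pos hu', Finset.mem_filter, Finset.mem_univ, true_and]
    simpa using hF1 u hu'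
  · intro u hu w hw heq
    have hu' : u ≠ v0 := (Finset.mem_erase.mp hu).1
    have hw' : w ≠ v0 := (Finset.mem_erase.mp hw).1
    simp only [dif_pos hu', dif_pos hw'] at heq
    rcases hF2 u hu' with ⟨hu1, hu2⟩ | ⟨hu1, hu2⟩ <;>
      rcases hF2 w hw' with ⟨hw1, hw2⟩ | ⟨hw1, hw2⟩
    · rw [hu1, hw1, heq]
    · -- u = inl, w = inr with same edge: parents point at each other
      exfalso
      have h1 : par u hu' = w := by rw [hu2, heq]; exact hw1.symm
      have h2 : par w hw' = u := by rw [hw2, ← heq]; exact hu1.symm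
      have l1 := hparlt u hu'
      have l2 := hparlt w hw'
      rw [h1] at l1; rw [h2] at l2; omega
    · exfalso
      have h1 : par u hu' = w := by rw [hu2, heq]; exact hw1.symm
      have h2 : par w hw' = u := by rw [hw2, ← heq]; exact hu1.symm
      have l1 := hparlt u hu'
      have l2 := hparlt w hw'
      rw [h1] at l1; rw [h2] at l2; omega
    · rw [hu1, hw1, heq]

lemma sum_deleteEdge {T : Fin n → Finset (Fin d)} {i : Fin n} {j : Fin d} (hj : j ∈ T i) :
    (∑ i' : Fin n, (DeleteEdge T i j i').card) + 1 = ∑ i' : Fin n, (T i').card := by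
  have h : ∀ i', (DeleteEdge T i j i').card =
      Function.update (fun i'' => (T i'').card) i ((T i).card - 1) i' := by
    intro i'
    rcases eq_or_ne i' i with rfl | h
    · simp [DeleteEdge, Function.update_self, Finset.card_erase_of_mem hj]
    · simp [DeleteEdge, Function.update_of_ne h]
  rw [Finset.sum_congr rfl (fun i' _ => h i')]
  rw [Finset.sum_update_of_mem (Finset.mem_univ i), ← Finset.erase_eq]
  rw [← Finset.sum_erase_add Finset.univ _ (Finset.mem_univ i)]
  have hcard : 1 ≤ (T i).card := Finset.card_pos.mpr ⟨j, hj⟩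
  omega

lemma bridge {T : Fin n → Finset (Fin d)} (hT : IsSpanningTree T) {i : Fin n} {j : Fin d}
    (hj : j ∈ T i) : ¬ Rch (DeleteEdge T i j) (Sum.inl i) (Sum.inr j) := by
  intro hR
  have hconn : ∀ u, Rch (DeleteEdge T i j) u (Sum.inr j) := by
    intro u
    rcases rch_merge (i := i) (j := j) (hT.1 u (Sum.inr j)) with h | ⟨h1, h2⟩ | ⟨h1, h2⟩
    · exact h
    · exact h1.trans hR
    · exact h1
  have hb := card_bound hconn
  have hs := sum_deleteEdge hj
  have hd : 0 < d := lt_of_le_of_lt (Nat.zero_le _) j.isLt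
  have hn : 0 < n := lt_of_le_of_lt (Nat.zero_le _) i.isLt
  have ht2 := hT.2
  omega

lemma claimA {T : Fin n → Finset (Fin d)} (hT : IsSpanningTree T)
    {i i' : Fin n} {j j' : Fin d} (hj' : j' ∈ T i')
    (hne : ¬(i' = i ∧ j' = j)) (v : Fin n ⊕ Fin d)
    (hc : ¬ Rch (DeleteEdge T i j) (Sum.inl i') v) :
    ∀ u, ¬ Rch (DeleteEdge T i' j') u v → ¬ Rch (DeleteEdge T i j) u v := by
  intro u hu2 hR1
  have hj'1 : j' ∈ DeleteEdge T i j i' := mem_deleteEdge.mpr ⟨hj', hne⟩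
  have adj1 : Rch (DeleteEdge T i j) (Sum.inl i') (Sum.inr j') :=
    Relation.ReflTransGen.single hj'1
  have hcomm := deleteEdge_comm (T := T) (i := i) (i' := i') (j := j) (j' := j')
  have mono2 : ∀ {a b}, Rch (DeleteEdge (DeleteEdge T i j) i' j') a b →
      Rch (DeleteEdge T i' j') a b := by
    intro a b h
    rw [hcomm] at h
    exact rch_mono deleteEdge_subset h
  rcases rch_merge (i := i') (j := j') hR1 with h | ⟨ha, hb⟩ | ⟨ha, hb⟩
  · exact hu2 (mono2 h)
  · exact hc (adj1.trans (rch_mono deleteEdge_subset hb))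
  · exact hc (rch_mono deleteEdge_subset hb)

lemma opp_trichotomy {T : Fin n → Finset (Fin d)} (hT : IsSpanningTree T)
    {i i' : Fin n} {j j' : Fin d} (hj : j ∈ T i) (hj' : j' ∈ T i')
    (hne : (i, j) ≠ (i', j')) (v : Fin n ⊕ Fin d) :
    (∀ u, ¬ Rch (DeleteEdge T i j) u v → ¬ Rch (DeleteEdge T i' j') u v) ∨
    (∀ u, ¬ Rch (DeleteEdge T i' j') u v → ¬ Rch (DeleteEdge T i j) u v) ∨
    (∀ u, ¬ Rch (DeleteEdge T i j) u v → Rch (DeleteEdge T i' j') u v) := by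
  have hne1 : ¬(i' = i ∧ j' = j) := by
    rintro ⟨rfl, rfl⟩; exact hne rfl
  have hne2 : ¬(i = i' ∧ j = j') := by
    rintro ⟨rfl, rfl⟩; exact hne rfl
  set T1 := DeleteEdge T i j with hT1
  set T2 := DeleteEdge T i' j' with hT2
  by_cases h1 : Rch T1 (Sum.inl i') v
  · by_cases h2 : Rch T2 (Sum.inl i) v
    · -- disjoint
      right; right
      intro u hu
      by_contra hu2
      have hj'1 : j' ∈ T1 i' := mem_deleteEdge.mpr ⟨hj', hne1⟩
      have hj1 : j ∈ T2 i := mem_deleteEdge.mpr ⟨hj, hne2⟩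
      have adj1 : Rch T1 (Sum.inl i') (Sum.inr j') := Relation.ReflTransGen.single hj'1
      have adj2 : Rch T2 (Sum.inl i) (Sum.inr j) := Relation.ReflTransGen.single hj1
      have hcomm := deleteEdge_comm (T := T) (i := i) (i' := i') (j := j) (j' := j')
      have mono2 : ∀ {a b}, Rch (DeleteEdge T1 i' j') a b → Rch T2 a b := by
        intro a b h
        rw [hT1, hcomm] at h
        exact rch_mono deleteEdge_subset h
      have key : ∀ x, Rch T1 u x → ¬ Rch T1 x v → Rch T2 x v → False := by
        intro x hx hxv hx2
        rcases rch_merge (i := i') (j := j') hx with h | ⟨ha, hb⟩ | ⟨ha, hb⟩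
        · exact hu2 ((mono2 h).trans hx2)
        · exact hxv (rch_symm ((adj1.trans (rch_mono deleteEdge_subset hb)).trans
            (Relation.ReflTransGen.refl)) |> fun hh => absurd h1 (by
              intro _; exact hxv ((rch_symm (adj1.trans (rch_mono deleteEdge_subset hb))).trans h1)))
        · exact hxv ((rch_symm (rch_mono deleteEdge_subset hb)).trans h1)
      rcases rch_merge (i := i) (j := j) (hT.1 u v) with h | ⟨ha, hb⟩ | ⟨ha, hb⟩
      · exact hu h
      · exact key (Sum.inl i) ha (fun hh => hu (ha.trans hh)) h2
      · exact key (Sum.inr j) ha (fun hh => hu (ha.trans hh))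
          ((rch_symm adj2).trans h2)
    · -- e1 on far side of e2 : I1 ⊆ I2
      left
      exact claimA hT hj hne2 v h2
  · -- e2 on far side of e1 : I2 ⊆ I1
    right; left
    exact claimA hT hj' hne1 v h1

/-- the 0/1 matrix whose rows are the indicator vectors (on `[d-1]`)
of the sets `I_e`, over edges `e` of the spanning tree `T` whose left endpoint
has degree at least `2`, is totally unimodular. -/
theorem cell_matrix_TU {n d : ℕ} (hd : 0 < d)
    (T : Fin n → Finset (Fin d)) (hT : IsSpanningTree T)
    (Y : Matrix {p : Fin n × Fin d // p.2 ∈ T p.1 ∧ 2 ≤ (T p.1).card} (Fin (d - 1)) ℚ)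
    (hY : ∀ e j, Y e j =
      if (Fin.castLE (Nat.sub_le d 1) j : Fin d) ∈
          OppComponent (DeleteEdge T e.1.1 e.1.2) ⟨d - 1, by omega⟩
      then 1 else 0) :
    IsTU Y := by
  intro k f g hf hg
  classical
  set J : Fin k → Finset (Fin k) := fun p =>
    Finset.univ.filter (fun q => (Fin.castLE (Nat.sub_le d 1) (g q) : Fin d) ∈
      OppComponent (DeleteEdge T (f p).1.1 (f p).1.2) ⟨d - 1, by omega⟩) with hJdef
  have hsub : Y.submatrix f g = Matrix.of fun p q => if q ∈ J p then (1 : ℚ) else 0 := by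
    ext p q
    simp only [Matrix.submatrix_apply, hY, hJdef, Matrix.of_apply, Finset.mem_filter,
      Finset.mem_univ, true_and]
  have hlam : LaminarFam J := by
    intro p q
    by_cases hpq : p = q
    · subst hpq; left; exact subset_rfl
    · have hprod : (f p).1 ≠ (f q).1 := fun h => (hf.ne hpq) (Subtype.ext h)
      have hne : ((f p).1.1, (f p).1.2) ≠ ((f q).1.1, (f q).1.2) := by
        simpa using hprod
      rcases opp_trichotomy hT (f p).2.1 (f q).2.1 hne
          (Sum.inr (⟨d - 1, by omega⟩ : Fin d)) with h | h | h
      · left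
        intro x hx
        simp only [hJdef, Finset.mem_filter, Finset.mem_univ, true_and] at hx ⊢
        exact h _ hx
      · right; left
        intro x hx
        simp only [hJdef, Finset.mem_filter, Finset.mem_univ, true_and] at hx ⊢
        exact h _ hx
      · right; right
        intro x hx hx'
        simp only [hJdef, Finset.mem_filter, Finset.mem_univ, true_and] at hx hx'
        exact hx' (h _ hx)
  rw [hsub]
  exact det_laminar k J hlam

end TOMPaper
end

section
/- Let Y be an m×n matrix with entries in {0,1} such that for any two rows, their supports (the sets of columns where the entry is 1) are comparable (one contains the other) or disjoint. Then there is a permutation of the columns of Y after which every row has its 1's in consecutive positions; consequently, Y is totally unimodular. -/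
open scoped Classical

namespace TOMPaper

variable {n d : ℕ}

private lemma lex_lt_iff' {m : ℕ} {f g : Fin m → Bool} :
    toLex f < toLex g ↔ ∃ a, (∀ j, j < a → f j = g j) ∧ f a = false ∧ g a = true := by
  constructor
  · rintro ⟨a, h1, h2⟩
    exact ⟨a, h1, Bool.lt_iff.1 h2⟩
  · rintro ⟨a, h1, h2, h3⟩
    exact ⟨a, h1, by show f a < g a; rw [h2, h3]; exact Bool.false_lt_true⟩

private lemma interval_det :
    ∀ (N k : ℕ) (M : Matrix (Fin k) (Fin k) ℚ),
      (Finset.univ.filter (fun p : Fin k × Fin k => M p.1 p.2 = 1)).card ≤ N →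
      (∀ i j, M i j = 0 ∨ M i j = 1) →
      (∀ i (j1 j2 j3 : Fin k), j1 ≤ j2 → j2 ≤ j3 → M i j1 = 1 → M i j3 = 1 → M i j2 = 1) →
      M.det = 0 ∨ M.det = 1 ∨ M.det = -1 := by
  intro N
  induction N using Nat.strong_induction_on with
  | _ N IH =>
    intro k M hones h01 hint
    obtain _ | k := k
    · right; left; exact Matrix.det_isEmpty
    by_cases hcol : ∀ i, M i 0 = 0
    · left; exact Matrix.det_eq_zero_of_column_eq_zero 0 hcol
    push_neg at hcol
    obtain ⟨r0, hr0⟩ := hcol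
    have hr0' : M r0 0 = 1 := (h01 r0 0).resolve_left hr0
    set S : Fin (k + 1) → Finset (Fin (k + 1)) :=
      fun i => Finset.univ.filter (fun j => M i j = 1) with hSdef
    have hmemS : ∀ i j, j ∈ S i ↔ M i j = 1 := by
      intro i j; simp [hSdef]
    set F : Finset (Fin (k + 1)) := Finset.univ.filter (fun i => M i 0 = 1) with hFdef
    have hmemF : ∀ i, i ∈ F ↔ M i 0 = 1 := by intro i; simp [hFdef]
    have hFne : F.Nonempty := ⟨r0, (hmemF r0).2 hr0'⟩
    obtain ⟨r, hrF, hrmin⟩ := F.exists_min_image (fun i => (S i).card) hFne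
    have hrcol : M r 0 = 1 := (hmemF r).1 hrF
    -- rows containing column 0 have lower-set support
    have hlow : ∀ i, M i 0 = 1 → ∀ j j' : Fin (k + 1), j' ≤ j → j ∈ S i → j' ∈ S i := by
      intro i hi j j' hle hj
      exact (hmemS i j').2 (hint i 0 j' j (Fin.zero_le _) hle hi ((hmemS i j).1 hj))
    -- S r is contained in S s for every s ∈ F
    have hsub : ∀ s, M s 0 = 1 → S r ⊆ S s := by
      intro s hs j hj
      by_contra hjs
      have hSsub : S s ⊆ S r := by
        intro x hx
        have hxj : x ≤ j := by
          by_contra hxj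
          exact hjs (hlow s hs x j (le_of_not_ge hxj) hx)
        exact hlow r hrcol j x hxj hj
      have : (S s).card < (S r).card :=
        Finset.card_lt_card (Finset.ssubset_iff_of_subset hSsub |>.2 ⟨j, hj, hjs⟩)
      exact absurd (hrmin s ((hmemF s).2 hs)) (not_le.2 this)
    by_cases huniq : ∀ s, M s 0 = 1 → s = r
    · -- expand along column 0
      have hdet : M.det = (-1) ^ (r : ℕ) * (M.submatrix r.succAbove Fin.succ).det := by
        rw [Matrix.det_succ_column_zero]
        rw [Finset.sum_eq_single r]
        · rw [hrcol]; ring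
        · intro b _ hb
          have : M b 0 = 0 := by
            rcases h01 b 0 with h | h
            · exact h
            · exact absurd (huniq b h) hb
          rw [this]; ring
        · intro h; exact absurd (Finset.mem_univ r) h
      set M' := M.submatrix r.succAbove Fin.succ with hM'
      have h01' : ∀ i j, M' i j = 0 ∨ M' i j = 1 := fun i j => h01 _ _
      have hint' : ∀ i (j1 j2 j3 : Fin k), j1 ≤ j2 → j2 ≤ j3 →
          M' i j1 = 1 → M' i j3 = 1 → M' i j2 = 1 := by
        intro i j1 j2 j3 h12 h23 hA hB
        exact hint _ j1.succ j2.succ j3.succ (Fin.succ_le_succ_iff.2 h12)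
          (Fin.succ_le_succ_iff.2 h23) hA hB
      have hcard : (Finset.univ.filter (fun p : Fin k × Fin k => M' p.1 p.2 = 1)).card <
          (Finset.univ.filter (fun p : Fin (k+1) × Fin (k+1) => M p.1 p.2 = 1)).card := by
        have hmaps : ∀ p ∈ Finset.univ.filter (fun p : Fin k × Fin k => M' p.1 p.2 = 1),
            (r.succAbove p.1, p.2.succ) ∈
              (Finset.univ.filter (fun p : Fin (k+1) × Fin (k+1) => M p.1 p.2 = 1)).erase
                (r, 0) := by
          intro p hp
          rw [Finset.mem_filter] at hp
          refine Finset.mem_erase.2 ⟨?_, Finset.mem_filter.2 ⟨Finset.mem_univ _, hp.2⟩⟩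
          intro h
          exact Fin.succ_ne_zero p.2 (congrArg Prod.snd h)
        have hinj : ∀ p ∈ Finset.univ.filter (fun p : Fin k × Fin k => M' p.1 p.2 = 1),
            ∀ q ∈ Finset.univ.filter (fun p : Fin k × Fin k => M' p.1 p.2 = 1),
            (r.succAbove p.1, p.2.succ) = (r.succAbove q.1, q.2.succ) → p = q := by
          intro p _ q _ h
          have h1 := Fin.succAbove_right_injective (p := r) (congrArg Prod.fst h)
          have h2 := Fin.succ_injective _ (congrArg Prod.snd h)
          exact Prod.ext h1 h2
        calc (Finset.univ.filter (fun p : Fin k × Fin k => M' p.1 p.2 = 1)).card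
            ≤ ((Finset.univ.filter
                (fun p : Fin (k+1) × Fin (k+1) => M p.1 p.2 = 1)).erase (r, 0)).card :=
              Finset.card_le_card_of_injOn _ hmaps hinj
          _ < _ := by
              apply Finset.card_erase_lt_of_mem
              exact Finset.mem_filter.2 ⟨Finset.mem_univ _, hrcol⟩
      have hN : (Finset.univ.filter (fun p : Fin k × Fin k => M' p.1 p.2 = 1)).card < N :=
        lt_of_lt_of_le hcard hones
      rcases IH _ hN k M' le_rfl h01' hint' with h | h | h <;>
        rcases Nat.even_or_odd (r : ℕ) with hpar | hpar <;>
          rw [hdet] <;>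
          simp [h, hpar.neg_one_pow]
    · push_neg at huniq
      obtain ⟨s, hs1, hsr⟩ := huniq
      have hSrs : S r ⊆ S s := hsub s hs1
      set M' := M.updateRow s (M s + (-1 : ℚ) • M r) with hM'
      have happ : ∀ j, M' s j = M s j - M r j := by
        intro j; rw [hM', Matrix.updateRow_self]; simp; ring
      have happ' : ∀ i, i ≠ s → ∀ j, M' i j = M i j := by
        intro i hi j; rw [hM', Matrix.updateRow_ne hi]
      have hdet : M'.det = M.det := Matrix.det_updateRow_add_smul_self M hsr (-1)
      have hrow : ∀ j, M' s j = 1 ↔ (M s j = 1 ∧ M r j = 0) := by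
        intro j
        rw [happ]
        constructor
        · intro h
          rcases h01 s j with hsj | hsj <;> rcases h01 r j with hrj | hrj <;>
            rw [hsj, hrj] at h <;> norm_num at h <;> (try simp [hsj, hrj])
        · rintro ⟨h1, h2⟩; rw [h1, h2]; ring
      have h01' : ∀ i j, M' i j = 0 ∨ M' i j = 1 := by
        intro i j
        by_cases hi : i = s
        · subst hi
          rw [happ]
          rcases h01 i j with h | h <;> rcases h01 r j with h' | h'
          · rw [h, h']; left; ring
          · exfalso
            have : j ∈ S r := (hmemS r j).2 h'
            have := (hmemS i j).1 (hSrs this)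
            rw [this] at h; norm_num at h
          · rw [h, h']; right; ring
          · rw [h, h']; left; ring
        · rw [happ' i hi]; exact h01 i j
      have hint' : ∀ i (j1 j2 j3 : Fin (k+1)), j1 ≤ j2 → j2 ≤ j3 →
          M' i j1 = 1 → M' i j3 = 1 → M' i j2 = 1 := by
        intro i j1 j2 j3 h12 h23 hA hB
        by_cases hi : i = s
        · subst hi
          rw [hrow] at hA hB ⊢
          refine ⟨hint i j1 j2 j3 h12 h23 hA.1 hB.1, ?_⟩
          by_contra hrj2
          have : M r j2 = 1 := (h01 r j2).resolve_left hrj2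
          have : j1 ∈ S r := hlow r hrcol j2 j1 h12 ((hmemS r j2).2 this)
          rw [hmemS] at this
          rw [this] at hA
          exact one_ne_zero hA.2
        · rw [happ' i hi] at hA hB ⊢
          exact hint i j1 j2 j3 h12 h23 hA hB
      have hcard : (Finset.univ.filter (fun p : Fin (k+1) × Fin (k+1) => M' p.1 p.2 = 1)).card <
          (Finset.univ.filter (fun p : Fin (k+1) × Fin (k+1) => M p.1 p.2 = 1)).card := by
        apply Finset.card_lt_card
        rw [Finset.ssubset_iff_of_subset]
        · refine ⟨(s, 0), Finset.mem_filter.2 ⟨Finset.mem_univ _, hs1⟩, ?_⟩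
          rw [Finset.mem_filter]
          rintro ⟨-, h⟩
          rw [hrow] at h
          rw [hrcol] at h
          exact one_ne_zero h.2
        · intro p hp
          rw [Finset.mem_filter] at hp ⊢
          refine ⟨Finset.mem_univ _, ?_⟩
          by_cases hps : p.1 = s
          · rw [hps] at hp ⊢
            exact ((hrow p.2).1 hp.2).1
          · rw [happ' p.1 hps] at hp; exact hp.2
      have hN := lt_of_lt_of_le hcard hones
      rw [← hdet]
      exact IH _ hN (k+1) M' le_rfl h01' hint'


private lemma interval_TU {m n : ℕ} (Z : Matrix (Fin m) (Fin n) ℚ)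
    (h01 : ∀ i j, Z i j = 0 ∨ Z i j = 1)
    (hint : ∀ i (j1 j2 j3 : Fin n), j1 ≤ j2 → j2 ≤ j3 → Z i j1 = 1 → Z i j3 = 1 → Z i j2 = 1) :
    ∀ (k : ℕ) (f : Fin k → Fin m) (g : Fin k → Fin n), Function.Injective g →
      (Z.submatrix f g).det = 0 ∨ (Z.submatrix f g).det = 1 ∨ (Z.submatrix f g).det = -1 := by
  intro k f g hg
  set s : Finset (Fin n) := Finset.univ.image g with hs
  have hcard : s.card = k := by
    rw [hs, Finset.card_image_of_injective _ hg, Finset.card_univ, Fintype.card_fin]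
  set mo : Fin k ≃o {x // x ∈ s} := s.orderIsoOfFin hcard with hmo
  have hmem : ∀ i, g i ∈ s := fun i => Finset.mem_image_of_mem g (Finset.mem_univ i)
  set e' : Fin k → {x // x ∈ s} := fun i => ⟨g i, hmem i⟩ with he'
  have hbij : Function.Bijective e' := by
    rw [Fintype.bijective_iff_injective_and_card]
    refine ⟨fun a b hab => hg (congrArg Subtype.val hab), by simp [Fintype.card_coe, hcard]⟩
  set τ : Equiv.Perm (Fin k) := (Equiv.ofBijective e' hbij).trans mo.toEquiv.symm with hτ
  have hg_eq : ∀ i, g i = ((mo (τ i) : {x // x ∈ s}) : Fin n) := by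
    intro i
    rw [hτ]
    simp [he']
  have hmono : ∀ t t' : Fin k, t ≤ t' → ((mo t : {x // x ∈ s}) : Fin n) ≤ (mo t' : _) := by
    intro t t' h
    exact Subtype.coe_le_coe.2 (mo.monotone h)
  set A : Matrix (Fin k) (Fin k) ℚ := Z.submatrix f (fun t => ((mo t : {x // x ∈ s}) : Fin n))
    with hA
  have key : Z.submatrix f g = A.submatrix id ⇑τ := by
    ext i j
    rw [Matrix.submatrix_apply, Matrix.submatrix_apply, hA, Matrix.submatrix_apply, id]
    rw [hg_eq]
  have hA01 : ∀ i j, A i j = 0 ∨ A i j = 1 := fun i j => h01 _ _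
  have hAint : ∀ i (j1 j2 j3 : Fin k), j1 ≤ j2 → j2 ≤ j3 →
      A i j1 = 1 → A i j3 = 1 → A i j2 = 1 := by
    intro i j1 j2 j3 h12 h23 hx hy
    exact hint (f i) _ _ _ (hmono _ _ h12) (hmono _ _ h23) hx hy
  have hdetA := interval_det _ k A le_rfl hA01 hAint
  rw [key, Matrix.det_permute']
  rcases Int.units_eq_one_or (Equiv.Perm.sign τ) with hsg | hsg <;>
    rw [hsg] <;> rcases hdetA with h | h | h <;> rw [h] <;> norm_num


/-- a 0/1 matrix whose row supports are pairwise comparable or disjoint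
can be turned into an interval matrix by a column permutation; consequently it is
totally unimodular. -/
theorem laminar_matrix_interval_and_TU {m n : ℕ} (Y : Matrix (Fin m) (Fin n) ℚ)
    (h01 : ∀ i j, Y i j = 0 ∨ Y i j = 1)
    (hsupp : ∀ i i' : Fin m,
      {j | Y i j = 1} ⊆ {j | Y i' j = 1} ∨
      {j | Y i' j = 1} ⊆ {j | Y i j = 1} ∨
      Disjoint {j | Y i j = 1} {j | Y i' j = 1}) :
    (∃ σ : Equiv.Perm (Fin n), ∀ i : Fin m, ∀ j1 j2 j3 : Fin n,
      j1 ≤ j2 → j2 ≤ j3 → Y i (σ j1) = 1 → Y i (σ j3) = 1 → Y i (σ j2) = 1) ∧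
    IsTU Y := by
  set S : Fin m → Finset (Fin n) := fun i => Finset.univ.filter (fun j => Y i j = 1) with hS
  have hmemS : ∀ i j, j ∈ S i ↔ Y i j = 1 := by intro i j; simp [hS]
  have hlam : ∀ i i', (S i ⊆ S i') ∨ (S i' ⊆ S i) ∨ (Disjoint (S i) (S i')) := by
    intro i i'
    rcases hsupp i i' with h | h | h
    · left; intro j hj; exact (hmemS i' j).2 (h ((hmemS i j).1 hj))
    · right; left; intro j hj; exact (hmemS i j).2 (h ((hmemS i' j).1 hj))
    · right; right
      rw [Finset.disjoint_left]
      intro a ha ha'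
      exact Set.disjoint_left.1 h ((hmemS i a).1 ha) ((hmemS i' a).1 ha')
  set ρ : Equiv.Perm (Fin m) := Tuple.sort (fun i => n - (S i).card) with hρdef
  have hρ : ∀ t t' : Fin m, t ≤ t' → (S (ρ t')).card ≤ (S (ρ t)).card := by
    intro t t' h
    have h1 := Tuple.monotone_sort (fun i => n - (S i).card) h
    simp only [Function.comp_apply] at h1
    have h2 : (S (ρ t)).card ≤ n := by
      simpa using Finset.card_le_univ (S (ρ t))
    have h3 : (S (ρ t')).card ≤ n := by
      simpa using Finset.card_le_univ (S (ρ t'))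
    rw [← hρdef] at h1
    omega
  letI : LinearOrder (Lex (∀ _ : Fin m, Bool)) :=
    @Pi.Lex.linearOrder (Fin m) (fun _ => Bool)
      inferInstance (inferInstance : WellFoundedLT (Fin m)) (fun _ => inferInstance)
  set key : Fin n → Lex (∀ _ : Fin m, Bool) := fun c => toLex (fun t => decide (c ∈ S (ρ t)))
    with hkey
  set σ : Equiv.Perm (Fin n) := Tuple.sort key with hσdef
  have hmono : ∀ t t' : Fin n, t ≤ t' → key (σ t) ≤ key (σ t') := by
    intro t t' h
    have h2 := Tuple.monotone_sort key h
    exact h2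
  have core : ∀ (c1 c2 c3 : Fin n) (i : Fin m), key c1 ≤ key c2 → key c2 ≤ key c3 →
      c1 ∈ S i → c3 ∈ S i → c2 ∈ S i := by
    intro c1 c2 c3 i h12 h23 h1 h3
    by_contra h2
    set p := ρ.symm i with hp
    have hρp : ρ p = i := Equiv.apply_symm_apply ρ i
    rcases eq_or_lt_of_le h12 with heq | hlt12
    · have heq' : (fun t => decide (c1 ∈ S (ρ t))) = fun t => decide (c2 ∈ S (ρ t)) := by
        have := congrArg ofLex heq
        simpa [hkey] using this
      have := congrFun heq' p
      rw [hρp] at this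
      simp [h1, h2] at this
    rcases eq_or_lt_of_le h23 with heq | hlt23
    · have heq' : (fun t => decide (c2 ∈ S (ρ t))) = fun t => decide (c3 ∈ S (ρ t)) := by
        have := congrArg ofLex heq
        simpa [hkey] using this
      have := congrFun heq' p
      rw [hρp] at this
      simp [h3, h2] at this
    rw [hkey] at hlt12 hlt23
    obtain ⟨a, ha, ha1, ha2⟩ := lex_lt_iff'.1 hlt12
    obtain ⟨b, hb, hb1, hb2⟩ := lex_lt_iff'.1 hlt23
    rw [decide_eq_false_iff_not] at ha1
    rw [decide_eq_true_iff] at ha2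
    rw [decide_eq_false_iff_not] at hb1
    rw [decide_eq_true_iff] at hb2
    rcases lt_trichotomy a b with hab | hab | hab
    · -- S (ρ a) contains c2, c3, not c1 ; S i contains c1, c3, not c2
      have hc3a : c3 ∈ S (ρ a) := by
        have := hb a hab
        rw [decide_eq_decide] at this
        exact this.1 ha2
      rcases hlam (ρ a) i with h | h | h
      · exact h2 (h ha2)
      · exact ha1 (h h1)
      · exact Finset.disjoint_left.1 h hc3a h3
    · subst hab
      exact hb1 ha2
    · -- b < a : S (ρ b) contains c3, not c1, not c2
      have hc1b : c1 ∉ S (ρ b) := by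
        have := ha b hab
        rw [decide_eq_decide] at this
        intro hc
        exact hb1 (this.1 hc)
      have hbp : b ≤ p := by
        by_contra hbp
        have := hb p (lt_of_not_ge hbp)
        rw [decide_eq_decide, hρp] at this
        exact h2 (this.2 h3)
      have hcard : (S i).card ≤ (S (ρ b)).card := by
        have := hρ b p hbp
        rwa [hρp] at this
      rcases hlam (ρ b) i with h | h | h
      · have heq : S (ρ b) = S i := Finset.eq_of_subset_of_card_le h hcard
        rw [heq] at hc1b
        exact hc1b h1
      · exact hc1b (h h1)
      · exact Finset.disjoint_left.1 h hb2 h3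
  have hintσ : ∀ i : Fin m, ∀ j1 j2 j3 : Fin n,
      j1 ≤ j2 → j2 ≤ j3 → Y i (σ j1) = 1 → Y i (σ j3) = 1 → Y i (σ j2) = 1 := by
    intro i j1 j2 j3 h12 h23 hy1 hy3
    exact (hmemS _ _).1 (core (σ j1) (σ j2) (σ j3) i (hmono _ _ h12) (hmono _ _ h23)
      ((hmemS _ _).2 hy1) ((hmemS _ _).2 hy3))
  refine ⟨⟨σ, hintσ⟩, ?_⟩
  intro k f g hf hg
  set Z : Matrix (Fin m) (Fin n) ℚ := fun i j => Y i (σ j) with hZ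
  have hZ01 : ∀ i j, Z i j = 0 ∨ Z i j = 1 := fun i j => h01 i (σ j)
  have hYZ : Y.submatrix f g = Z.submatrix f (fun j => σ.symm (g j)) := by
    ext i j
    rw [Matrix.submatrix_apply, Matrix.submatrix_apply, hZ]
    simp
  rw [hYZ]
  exact interval_TU Z hZ01 hintσ k f _ (fun a b hab => hg (σ.symm.injective hab))

end TOMPaper
end

section
/- Let T=(T_1,…,T_n) be a spanning tree of K_{n,d}, let P = Δ_{T_1}+⋯+Δ_{T_n} ⊂ ℝ^d, and let a=(a_1,…,a_d)∈ℤ^d. If the set P' = P ∩ {x∈ℝ^d : x_j ≥ a_j for all j∈[d]} is nonempty, then P' is a polytope all of whose vertices are integer points. -/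
open scoped Classical

namespace TOMPaper

variable {n d : ℕ}

lemma mem_simplexOf_iff {I : Finset (Fin d)} {x : Fin d → ℝ} :
    x ∈ simplexOf I ↔ (∀ j, 0 ≤ x j) ∧ (∀ j, j ∉ I → x j = 0) ∧ ∑ j, x j = 1 := by
  constructor
  · intro hx
    have hconv : Convex ℝ {x : Fin d → ℝ |
        (∀ j, 0 ≤ x j) ∧ (∀ j, j ∉ I → x j = 0) ∧ ∑ j, x j = 1} := by
      rintro u ⟨hu0, huI, hus⟩ v ⟨hv0, hvI, hvs⟩ α β hα hβ hαβ
      refine ⟨fun j => add_nonneg (mul_nonneg hα (hu0 j)) (mul_nonneg hβ (hv0 j)),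
        fun j hj => by simp [huI j hj, hvI j hj], ?_⟩
      simp only [Pi.add_apply, Pi.smul_apply, smul_eq_mul]
      rw [Finset.sum_add_distrib, ← Finset.mul_sum, ← Finset.mul_sum, hus, hvs]
      simpa using hαβ
    refine convexHull_min ?_ hconv hx
    rintro y ⟨i, hi, rfl⟩
    refine ⟨fun j => ?_, fun j hj => ?_, ?_⟩
    · rw [Pi.single_apply]; split <;> norm_num
    · rw [Pi.single_apply, if_neg]; rintro rfl; exact hj hi
    · simp [Pi.single_apply]
  · rintro ⟨h0, hI, hs⟩
    have hsI : ∑ j ∈ I, x j = 1 := by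
      rw [Finset.sum_subset I.subset_univ (fun j _ hj => hI j hj)]; exact hs
    have hx : x = ∑ j ∈ I, x j • (Pi.single j 1 : Fin d → ℝ) := by
      funext k
      rw [Finset.sum_apply]
      simp only [Pi.smul_apply, Pi.single_apply, smul_eq_mul, mul_ite, mul_one, mul_zero]
      rw [Finset.sum_ite_eq]
      split
      · rfl
      · exact hI k (by assumption)
    have hmem := I.centerMass_mem_convexHull (s := {x : Fin d → ℝ | ∃ i ∈ I, x = Pi.single i 1}) (w := fun j => x j)
      (z := fun j => Pi.single j (1:ℝ)) (fun j hj => h0 j)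
      (by rw [hsI]; norm_num) (fun j hj => by exact ⟨j, hj, rfl⟩)
    rw [Finset.centerMass_eq_of_sum_1 _ _ hsI] at hmem
    rw [hx]; exact hmem

lemma le_one_of_mem_simplexOf {I : Finset (Fin d)} {x : Fin d → ℝ}
    (hx : x ∈ simplexOf I) (j : Fin d) : x j ≤ 1 := by
  obtain ⟨h0, -, hs⟩ := mem_simplexOf_iff.1 hx
  calc x j ≤ ∑ k, x k := Finset.single_le_sum (fun k _ => h0 k) (Finset.mem_univ j)
  _ = 1 := hs


lemma row_sum_eq (F : Finset (Fin n × Fin d)) (w : Fin n × Fin d → ℝ)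
    (hw : ∀ e, e ∉ F → w e = 0) (i : Fin n) :
    ∑ j : Fin d, w (i, j) = ∑ e ∈ F.filter (fun e => e.1 = i), w e := by
  rw [← Finset.sum_subset (Finset.filter_subset (fun j => (i, j) ∈ F) Finset.univ)
      (fun j _ hj => hw _ (by simpa using hj))]
  refine Finset.sum_bij' (fun j _ => (i, j)) (fun e _ => e.2) ?_ ?_ ?_ ?_ ?_
  · intro j hj
    exact Finset.mem_filter.2 ⟨(Finset.mem_filter.1 hj).2, rfl⟩
  · intro e he
    rcases Finset.mem_filter.1 he with ⟨heF, he1⟩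
    refine Finset.mem_filter.2 ⟨Finset.mem_univ _, ?_⟩
    obtain ⟨e1, e2⟩ := e
    cases he1
    exact heF
  · intro j hj; rfl
  · intro e he
    rcases Finset.mem_filter.1 he with ⟨heF, he1⟩
    obtain ⟨e1, e2⟩ := e
    cases he1
    rfl
  · intro j hj; rfl

lemma col_sum_eq (F : Finset (Fin n × Fin d)) (w : Fin n × Fin d → ℝ)
    (hw : ∀ e, e ∉ F → w e = 0) (c : Fin d) :
    ∑ i : Fin n, w (i, c) = ∑ e ∈ F.filter (fun e => e.2 = c), w e := by
  rw [← Finset.sum_subset (Finset.filter_subset (fun i => (i, c) ∈ F) Finset.univ)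
      (fun i _ hi => hw _ (by simpa using hi))]
  refine Finset.sum_bij' (fun i _ => (i, c)) (fun e _ => e.1) ?_ ?_ ?_ ?_ ?_
  · intro i hi
    exact Finset.mem_filter.2 ⟨(Finset.mem_filter.1 hi).2, rfl⟩
  · intro e he
    rcases Finset.mem_filter.1 he with ⟨heF, he2⟩
    refine Finset.mem_filter.2 ⟨Finset.mem_univ _, ?_⟩
    obtain ⟨e1, e2⟩ := e
    cases he2
    exact heF
  · intro i hi; rfl
  · intro e he
    rcases Finset.mem_filter.1 he with ⟨heF, he2⟩
    obtain ⟨e1, e2⟩ := e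
    cases he2
    rfl
  · intro i hi; rfl

/-- Key combinatorial-linear-algebra lemma: a nonempty bipartite edge set in which no
row has exactly one edge supports a nonzero "balanced" perturbation. -/
lemma exists_balanced (F : Finset (Fin n × Fin d)) (hFne : F.Nonempty)
    (hrow : ∀ i, (F.filter (fun e => e.1 = i)).card ≠ 1) :
    ∃ Z : Fin n → Fin d → ℝ, Z ≠ 0 ∧ (∀ i j, (i, j) ∉ F → Z i j = 0) ∧
      (∀ i, ∑ j, Z i j = 0) ∧
      ∀ c : Fin d, (F.filter (fun e => e.2 = c)).card ≠ 1 → ∑ i, Z i c = 0 := by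
  set R : Finset (Fin n) :=
    Finset.univ.filter (fun i => (F.filter (fun e => e.1 = i)).Nonempty) with hR
  set C2 : Finset (Fin d) :=
    Finset.univ.filter (fun c => 2 ≤ (F.filter (fun e => e.2 = c)).card) with hC2
  set C1 : Finset (Fin d) :=
    Finset.univ.filter (fun c => (F.filter (fun e => e.2 = c)).card = 1) with hC1
  -- counting facts
  have hcardrow : F.card = ∑ i : Fin n, (F.filter (fun e => e.1 = i)).card :=
    Finset.card_eq_sum_card_fiberwise (fun e _ => Finset.mem_univ e.1)
  have hcardcol : F.card = ∑ c : Fin d, (F.filter (fun e => e.2 = c)).card :=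
    Finset.card_eq_sum_card_fiberwise (fun e _ => Finset.mem_univ e.2)
  have hrow2 : ∀ i ∈ R, 2 ≤ (F.filter (fun e => e.1 = i)).card := by
    intro i hi
    rw [hR, Finset.mem_filter] at hi
    rcases Nat.lt_or_ge (F.filter (fun e => e.1 = i)).card 2 with h | h
    · interval_cases hc : (F.filter (fun e => e.1 = i)).card
      · exact absurd (Finset.card_eq_zero.1 hc) (Finset.nonempty_iff_ne_empty.1 hi.2)
      · exact absurd hc (hrow i)
    · exact h
  have hRcount : 2 * R.card ≤ F.card := by
    calc 2 * R.card = ∑ _i ∈ R, 2 := by rw [Finset.sum_const, smul_eq_mul, mul_comm]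
    _ ≤ ∑ i ∈ R, (F.filter (fun e => e.1 = i)).card := Finset.sum_le_sum hrow2
    _ ≤ ∑ i : Fin n, (F.filter (fun e => e.1 = i)).card :=
        Finset.sum_le_sum_of_subset R.subset_univ
    _ = F.card := hcardrow.symm
  have hdisj : Disjoint C1 C2 := by
    rw [Finset.disjoint_left]
    intro c hc1 hc2
    rw [hC1, Finset.mem_filter] at hc1
    rw [hC2, Finset.mem_filter] at hc2
    omega
  have hCcount : C1.card + 2 * C2.card ≤ F.card := by
    have h1 : C1.card = ∑ c ∈ C1, (F.filter (fun e => e.2 = c)).card := by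
      rw [Finset.sum_congr rfl (fun c hc => (Finset.mem_filter.1 hc).2)]
      simp
      rfl
    have h2 : 2 * C2.card ≤ ∑ c ∈ C2, (F.filter (fun e => e.2 = c)).card := by
      calc 2 * C2.card = ∑ _c ∈ C2, 2 := by rw [Finset.sum_const, smul_eq_mul, mul_comm]
      _ ≤ _ := Finset.sum_le_sum (fun c hc => (Finset.mem_filter.1 hc).2)
    calc C1.card + 2 * C2.card
        ≤ ∑ c ∈ C1, (F.filter (fun e => e.2 = c)).card
          + ∑ c ∈ C2, (F.filter (fun e => e.2 = c)).card := by omega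
    _ = ∑ c ∈ C1 ∪ C2, (F.filter (fun e => e.2 = c)).card :=
        (Finset.sum_union hdisj).symm
    _ ≤ ∑ c : Fin d, (F.filter (fun e => e.2 = c)).card :=
        Finset.sum_le_sum_of_subset (Finset.subset_univ _)
    _ = F.card := hcardcol.symm
  -- edge endpoints lie in R (and in C1 ∪ C2)
  have heR : ∀ e ∈ F, e.1 ∈ R := by
    intro e he
    rw [hR, Finset.mem_filter]
    exact ⟨Finset.mem_univ _, ⟨e, Finset.mem_filter.2 ⟨he, rfl⟩⟩⟩
  have heC : ∀ e ∈ F, e.2 ∈ C1 ∪ C2 := by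
    intro e he
    have h1 : 1 ≤ (F.filter (fun e' => e'.2 = e.2)).card :=
      Finset.card_pos.2 ⟨e, Finset.mem_filter.2 ⟨he, rfl⟩⟩
    rw [Finset.mem_union, hC1, hC2, Finset.mem_filter, Finset.mem_filter]
    rcases Nat.lt_or_ge (F.filter (fun e' => e'.2 = e.2)).card 2 with h | h
    · exact Or.inl ⟨Finset.mem_univ _, by omega⟩
    · exact Or.inr ⟨Finset.mem_univ _, h⟩
  -- the linear maps (row sums and C2-column sums)
  let Φr : ({e // e ∈ F} → ℝ) →ₗ[ℝ] ({i // i ∈ R} → ℝ) :=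
    LinearMap.pi (fun r => ∑ e ∈ Finset.univ.filter
      (fun e : {e // e ∈ F} => (e : Fin n × Fin d).1 = (r : Fin n)), LinearMap.proj e)
  let Φc : ({e // e ∈ F} → ℝ) →ₗ[ℝ] ({c // c ∈ C2} → ℝ) :=
    LinearMap.pi (fun c => ∑ e ∈ Finset.univ.filter
      (fun e : {e // e ∈ F} => (e : Fin n × Fin d).2 = (c : Fin d)), LinearMap.proj e)
  let Φ := Φr.prod Φc
  have hΦr : ∀ z r, Φr z r = ∑ e ∈ Finset.univ.filter
      (fun e : {e // e ∈ F} => (e : Fin n × Fin d).1 = (r : Fin n)), z e := by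
    intro z r
    simp [Φr, LinearMap.pi_apply, LinearMap.coe_sum, Finset.sum_apply, LinearMap.proj_apply]
  have hΦc : ∀ z c, Φc z c = ∑ e ∈ Finset.univ.filter
      (fun e : {e // e ∈ F} => (e : Fin n × Fin d).2 = (c : Fin d)), z e := by
    intro z c
    simp [Φc, LinearMap.pi_apply, LinearMap.coe_sum, Finset.sum_apply, LinearMap.proj_apply]
  have hfinF : Module.finrank ℝ ({e // e ∈ F} → ℝ) = F.card := by
    rw [Module.finrank_fintype_fun_eq_card, Fintype.card_coe]
  have hfincod : Module.finrank ℝ (({i // i ∈ R} → ℝ) × ({c // c ∈ C2} → ℝ))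
      = R.card + C2.card := by
    rw [Module.finrank_prod, Module.finrank_fintype_fun_eq_card,
      Module.finrank_fintype_fun_eq_card, Fintype.card_coe, Fintype.card_coe]
  have hFpos : 1 ≤ F.card := Finset.card_pos.2 hFne
  have hrange : Module.finrank ℝ (LinearMap.range Φ) < F.card := by
    rcases C1.eq_empty_or_nonempty with hC1e | hC1ne
    · -- C1 empty : use the dependency between row and column constraints
      obtain ⟨e₀, he₀⟩ := hFne
      have hRne : (⟨e₀.1, heR e₀ he₀⟩ : {i // i ∈ R}) = ⟨e₀.1, heR e₀ he₀⟩ := rfl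
      set r₀ : {i // i ∈ R} := ⟨e₀.1, heR e₀ he₀⟩ with hr₀
      let ψ : (({i // i ∈ R} → ℝ) × ({c // c ∈ C2} → ℝ)) →ₗ[ℝ] ℝ :=
        ((∑ r : {i // i ∈ R}, LinearMap.proj r).comp
            (LinearMap.fst ℝ ({i // i ∈ R} → ℝ) ({c // c ∈ C2} → ℝ))) -
          ((∑ c : {c // c ∈ C2}, LinearMap.proj c).comp
            (LinearMap.snd ℝ ({i // i ∈ R} → ℝ) ({c // c ∈ C2} → ℝ)))
      have hψ : ∀ p, ψ p = (∑ r : {i // i ∈ R}, p.1 r) - ∑ c : {c // c ∈ C2}, p.2 c := by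
        intro p
        simp [ψ, LinearMap.sub_apply, LinearMap.coe_sum, Finset.sum_apply,
          LinearMap.proj_apply]
      have hsub : LinearMap.range Φ ≤ LinearMap.ker ψ := by
        rintro _ ⟨z, rfl⟩
        rw [LinearMap.mem_ker, hψ]
        have hfst : (Φ z).1 = Φr z := rfl
        have hsnd : (Φ z).2 = Φc z := rfl
        rw [hfst, hsnd]
        have h1 : (∑ r : {i // i ∈ R}, Φr z r) = ∑ e : {e // e ∈ F}, z e := by
          simp_rw [hΦr, Finset.sum_filter]
          rw [Finset.sum_comm]
          refine Finset.sum_congr rfl (fun e _ => ?_)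
          rw [Finset.sum_coe_sort R (fun t => if (e : Fin n × Fin d).1 = t then z e else 0),
            Finset.sum_ite_eq R ((e : Fin n × Fin d).1) (fun _ => z e),
            if_pos (heR _ e.2)]
        have h2 : (∑ c : {c // c ∈ C2}, Φc z c) = ∑ e : {e // e ∈ F}, z e := by
          simp_rw [hΦc, Finset.sum_filter]
          rw [Finset.sum_comm]
          refine Finset.sum_congr rfl (fun e _ => ?_)
          rw [Finset.sum_coe_sort C2 (fun t => if (e : Fin n × Fin d).2 = t then z e else 0),
            Finset.sum_ite_eq C2 ((e : Fin n × Fin d).2) (fun _ => z e), if_pos ?_]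
          have := heC _ e.2
          rwa [hC1e, Finset.empty_union] at this
        rw [h1, h2, sub_self]
      have hψsurj : Function.Surjective ψ := by
        intro t
        refine ⟨((fun r => if r = r₀ then t else 0), 0), ?_⟩
        rw [hψ]
        simp [Finset.sum_ite_eq' Finset.univ r₀ (fun _ => t)]
      have hψrank : Module.finrank ℝ (LinearMap.range ψ) = 1 := by
        rw [LinearMap.range_eq_top.2 hψsurj, finrank_top, Module.finrank_self]
      have hψker : Module.finrank ℝ (LinearMap.ker ψ) = R.card + C2.card - 1 := by
        have h := LinearMap.finrank_range_add_finrank_ker ψ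
        rw [hψrank, hfincod] at h
        omega
      have hle := Submodule.finrank_mono hsub
      rw [hψker] at hle
      have hRpos : 1 ≤ R.card := Finset.card_pos.2 ⟨e₀.1, heR e₀ he₀⟩
      have hC1z : C1.card = 0 := by rw [hC1e]; rfl
      omega
    · have hle := Submodule.finrank_le (LinearMap.range Φ)
      rw [hfincod] at hle
      have hC1pos : 1 ≤ C1.card := Finset.card_pos.2 hC1ne
      omega
  have hker : ∃ z : {e // e ∈ F} → ℝ, z ≠ 0 ∧ Φ z = 0 := by
    have hrn := LinearMap.finrank_range_add_finrank_ker Φ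
    rw [hfinF] at hrn
    have hkpos : 0 < Module.finrank ℝ (LinearMap.ker Φ) := by omega
    have hne : LinearMap.ker Φ ≠ ⊥ := by
      intro hbot
      rw [hbot, finrank_bot] at hkpos
      exact lt_irrefl 0 hkpos
    obtain ⟨z, hzmem, hzne⟩ := Submodule.ne_bot_iff _ |>.1 hne
    exact ⟨z, hzne, hzmem⟩
  obtain ⟨z, hzne, hΦz⟩ := hker
  set w : Fin n × Fin d → ℝ := fun e => if h : e ∈ F then z ⟨e, h⟩ else 0 with hwdef
  have hwz : ∀ e : {e // e ∈ F}, w (e : Fin n × Fin d) = z e := by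
    intro e
    rw [hwdef]
    dsimp only
    rw [dif_pos e.2]
  have hw0 : ∀ e, e ∉ F → w e = 0 := by
    intro e he
    rw [hwdef]
    exact dif_neg he
  refine ⟨fun i j => w (i, j), ?_, fun i j hij => hw0 _ hij, ?_, ?_⟩
  · intro hZ0
    apply hzne
    funext e
    have h : w ((e : Fin n × Fin d).1, (e : Fin n × Fin d).2) = 0 := by
      simpa using congrFun (congrFun hZ0 (e : Fin n × Fin d).1) (e : Fin n × Fin d).2
    rw [Prod.mk.eta] at h
    simp only [Pi.zero_apply]
    rw [← hwz e]
    exact h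
  · intro i
    rw [row_sum_eq F w hw0 i]
    by_cases hi : i ∈ R
    · have h0 : Φr z ⟨i, hi⟩ = 0 := by
        have h := congrFun (congrArg Prod.fst hΦz) ⟨i, hi⟩
        exact h
      rw [hΦr] at h0
      rw [← h0, Finset.sum_filter, Finset.sum_filter,
        ← Finset.sum_coe_sort F (fun e => if e.1 = i then w e else 0)]
      exact Finset.sum_congr rfl (fun e _ => by rw [hwz])
    · have hemp : F.filter (fun e => e.1 = i) = ∅ := by
        rw [← Finset.not_nonempty_iff_eq_empty]
        intro hnon
        exact hi (Finset.mem_filter.2 ⟨Finset.mem_univ _, hnon⟩)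
      rw [hemp, Finset.sum_empty]
  · intro c hc
    rw [col_sum_eq F w hw0 c]
    by_cases hcc : c ∈ C2
    · have h0 : Φc z ⟨c, hcc⟩ = 0 := by
        have h := congrFun (congrArg Prod.snd hΦz) ⟨c, hcc⟩
        exact h
      rw [hΦc] at h0
      rw [← h0, Finset.sum_filter, Finset.sum_filter,
        ← Finset.sum_coe_sort F (fun e => if e.2 = c then w e else 0)]
      exact Finset.sum_congr rfl (fun e _ => by rw [hwz])
    · have h2 : ¬ 2 ≤ (F.filter (fun e => e.2 = c)).card := by
        intro h
        exact hcc (Finset.mem_filter.2 ⟨Finset.mem_univ _, h⟩)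
      have hemp : F.filter (fun e => e.2 = c) = ∅ := by
        rw [← Finset.card_eq_zero]
        omega
      rw [hemp, Finset.sum_empty]


/-- the intersection of the cell of a spanning tree of `K_{n,d}` with an
integral orthant `{x : x j ≥ a j}`, if nonempty, is a polytope with integer vertices
(it is the convex hull of finitely many integer points). -/
theorem cell_orthant_integer_polytope {n d : ℕ}
    (T : Fin n → Finset (Fin d)) (hT : IsSpanningTree T) (a : Fin d → ℤ)
    (hne : (cell T ∩ {x : Fin d → ℝ | ∀ j, (a j : ℝ) ≤ x j}).Nonempty) :
    ∃ V : Finset (Fin d → ℝ),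
      (∀ v ∈ V, ∀ j, ∃ z : ℤ, v j = (z : ℝ)) ∧
      cell T ∩ {x : Fin d → ℝ | ∀ j, (a j : ℝ) ≤ x j} = convexHull ℝ (↑V) := by
  classical
  set S : Set (Fin d → ℝ) := {x : Fin d → ℝ | ∀ j, (a j : ℝ) ≤ x j} with hS
  set Q : Set (Fin n → Fin d → ℝ) :=
    {y | (∀ i, y i ∈ simplexOf (T i)) ∧ ∀ j, (a j : ℝ) ≤ ∑ i, y i j} with hQdef
  let σ : (Fin n → Fin d → ℝ) →ₗ[ℝ] (Fin d → ℝ) := ∑ i : Fin n, LinearMap.proj i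
  have hσ : ∀ y : Fin n → Fin d → ℝ, σ y = ∑ i, y i := by
    intro y
    simp [σ, LinearMap.coe_sum, Finset.sum_apply, LinearMap.proj_apply]
  have hσapp : ∀ (y : Fin n → Fin d → ℝ) (j : Fin d), σ y j = ∑ i, y i j := by
    intro y j
    rw [hσ, Finset.sum_apply]
  have hσcont : Continuous σ := σ.continuous_of_finiteDimensional
  have himg : cell T ∩ S = σ '' Q := by
    ext x
    constructor
    · rintro ⟨⟨y, hy, rfl⟩, hxS⟩
      refine ⟨y, ⟨hy, fun j => ?_⟩, hσ y⟩
      have h := hxS j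
      rwa [Finset.sum_apply] at h
    · rintro ⟨y, ⟨hy, hcol⟩, rfl⟩
      refine ⟨⟨y, hy, hσ y⟩, fun j => ?_⟩
      rw [hσapp]
      exact hcol j
  have hsimplexcompact : ∀ I : Finset (Fin d), IsCompact (simplexOf I) := by
    intro I
    have hsub : {x : Fin d → ℝ | ∃ k ∈ I, x = Pi.single k 1}
        ⊆ (fun k : Fin d => (Pi.single k 1 : Fin d → ℝ)) '' (I : Set (Fin d)) := by
      rintro x ⟨k, hk, rfl⟩
      exact ⟨k, hk, rfl⟩
    exact (Set.Finite.subset (Set.Finite.image _ I.finite_toSet) hsub).isCompact_convexHull ℝ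
  have hQclosed : IsClosed Q := by
    have h1 : IsClosed {y : Fin n → Fin d → ℝ | ∀ i, y i ∈ simplexOf (T i)} := by
      have he : {y : Fin n → Fin d → ℝ | ∀ i, y i ∈ simplexOf (T i)}
          = ⋂ i, (fun y : Fin n → Fin d → ℝ => y i) ⁻¹' (simplexOf (T i)) := by
        ext y
        simp [Set.mem_iInter]
      rw [he]
      exact isClosed_iInter
        (fun i => ((hsimplexcompact (T i)).isClosed).preimage (continuous_apply i))
    have h2 : IsClosed {y : Fin n → Fin d → ℝ | ∀ j, (a j : ℝ) ≤ ∑ i, y i j} := by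
      have he : {y : Fin n → Fin d → ℝ | ∀ j, (a j : ℝ) ≤ ∑ i, y i j}
          = ⋂ j, {y : Fin n → Fin d → ℝ | (a j : ℝ) ≤ ∑ i, y i j} := by
        ext y
        simp [Set.mem_iInter]
      rw [he]
      refine isClosed_iInter (fun j => isClosed_le continuous_const ?_)
      exact continuous_finset_sum _ (fun i _ => (continuous_apply j).comp (continuous_apply i))
    have he : Q = {y : Fin n → Fin d → ℝ | ∀ i, y i ∈ simplexOf (T i)}
        ∩ {y : Fin n → Fin d → ℝ | ∀ j, (a j : ℝ) ≤ ∑ i, y i j} := by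
      ext y
      simp only [hQdef, Set.mem_setOf_eq, Set.mem_inter_iff]
    rw [he]
    exact h1.inter h2
  have hQcompact : IsCompact Q := by
    have hpi : IsCompact (Set.pi Set.univ (fun i => simplexOf (T i))) :=
      isCompact_univ_pi (fun i => hsimplexcompact (T i))
    refine hpi.of_isClosed_subset hQclosed ?_
    rintro y ⟨hy, -⟩
    exact fun i _ => hy i
  have hQconvex : Convex ℝ Q := by
    rintro y ⟨hy1, hy2⟩ z ⟨hz1, hz2⟩ α β hα hβ hαβ
    constructor
    · intro i
      have h := (convex_convexHull ℝ _) (hy1 i) (hz1 i) hα hβ hαβ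
      simpa [simplexOf] using h
    · intro j
      have h1 := hy2 j
      have h2 := hz2 j
      have he : ∑ i, (α • y + β • z) i j = α * (∑ i, y i j) + β * (∑ i, z i j) := by
        rw [Finset.mul_sum, Finset.mul_sum, ← Finset.sum_add_distrib]
        exact Finset.sum_congr rfl (fun i _ => by simp)
      rw [he]
      calc (a j : ℝ) = α * a j + β * a j := by rw [← add_mul, hαβ, one_mul]
      _ ≤ α * (∑ i, y i j) + β * (∑ i, z i j) :=
          add_le_add (mul_le_mul_of_nonneg_left h1 hα) (mul_le_mul_of_nonneg_left h2 hβ)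
  have hPcompact : IsCompact (cell T ∩ S) := by
    rw [himg]
    exact hQcompact.image hσcont
  have hPconvex : Convex ℝ (cell T ∩ S) := by
    rw [himg]
    exact hQconvex.linear_image σ
  -- every extreme point of `cell T ∩ S` has integer coordinates
  have hext : ∀ x ∈ Set.extremePoints ℝ (cell T ∩ S), ∀ j, ∃ zz : ℤ, x j = (zz : ℝ) := by
    intro x hx
    have hxmem : x ∈ σ '' Q := himg ▸ hx.1
    obtain ⟨y', hy'Q, hy'x⟩ := hxmem
    set Fib : Set (Fin n → Fin d → ℝ) := Q ∩ {y | σ y = x} with hFibdef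
    have hFibclosed : IsClosed Fib :=
      hQclosed.inter (isClosed_eq hσcont continuous_const)
    have hFibcompact : IsCompact Fib :=
      hQcompact.of_isClosed_subset hFibclosed Set.inter_subset_left
    have hFibne : Fib.Nonempty := ⟨y', hy'Q, hy'x⟩
    obtain ⟨y₀, hy₀ext⟩ := hFibcompact.extremePoints_nonempty hFibne
    obtain ⟨⟨hy₀Q, hy₀x⟩, hy₀min⟩ := hy₀ext
    have hy₀Qext : y₀ ∈ Set.extremePoints ℝ Q := by
      refine ⟨hy₀Q, fun y₁ h1 y₂ h2 hseg => ?_⟩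
      have hxseg : x ∈ openSegment ℝ (σ y₁) (σ y₂) := by
        obtain ⟨α, β, hα, hβ, hαβ, hy₀eq⟩ := hseg
        exact ⟨α, β, hα, hβ, hαβ, by rw [← hy₀x, ← hy₀eq]; simp [map_add, map_smul]⟩
      have hx1 : σ y₁ ∈ cell T ∩ S := himg ▸ ⟨y₁, h1, rfl⟩
      have hx2 : σ y₂ ∈ cell T ∩ S := himg ▸ ⟨y₂, h2, rfl⟩
      obtain ⟨e1, e2⟩ := (mem_extremePoints.1 hx).2 _ hx1 _ hx2 hxseg
      exact hy₀min ⟨h1, e1⟩ ⟨h2, e2⟩ hseg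
    have hy₀simp : ∀ i, (∀ j, 0 ≤ y₀ i j) ∧ (∀ j, j ∉ T i → y₀ i j = 0) ∧ ∑ j, y₀ i j = 1 :=
      fun i => mem_simplexOf_iff.1 (hy₀Q.1 i)
    have hy₀le1 : ∀ i j, y₀ i j ≤ 1 := fun i j => le_one_of_mem_simplexOf (hy₀Q.1 i) j
    set F : Finset (Fin n × Fin d) :=
      Finset.univ.filter (fun e => y₀ e.1 e.2 ≠ 0 ∧ y₀ e.1 e.2 ≠ 1) with hFdef
    have hmemF : ∀ i j, (i, j) ∈ F ↔ (y₀ i j ≠ 0 ∧ y₀ i j ≠ 1) := by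
      intro i j
      rw [hFdef]
      simp
    have hFrange : ∀ i j, (i, j) ∈ F → (0 < y₀ i j ∧ y₀ i j < 1) := by
      intro i j hij
      obtain ⟨h0, h1⟩ := (hmemF i j).1 hij
      exact ⟨lt_of_le_of_ne ((hy₀simp i).1 j) (Ne.symm h0), lt_of_le_of_ne (hy₀le1 i j) h1⟩
    have hint : ∀ i j, (i, j) ∉ F → y₀ i j = 0 ∨ y₀ i j = 1 := by
      intro i j hij
      by_contra hcon
      push_neg at hcon
      exact hij ((hmemF i j).2 hcon)
    have hxc : ∀ c, x c = ∑ i, y₀ i c := by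
      intro c
      rw [← hy₀x, hσapp]
    have hFempty : F = ∅ := by
      by_contra hFne'
      have hFnon : F.Nonempty := Finset.nonempty_iff_ne_empty.2 hFne'
      have hrowcard : ∀ i, (F.filter (fun e => e.1 = i)).card ≠ 1 := by
        intro i hcard
        obtain ⟨e₀, he₀⟩ := Finset.card_eq_one.1 hcard
        have he₀mem : e₀ ∈ F.filter (fun e => e.1 = i) := he₀ ▸ Finset.mem_singleton_self e₀
        obtain ⟨he₀F, he₀1⟩ := Finset.mem_filter.1 he₀mem
        have hothers : ∀ j, j ≠ e₀.2 → (i, j) ∉ F := by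
          intro j hj hjF
          have hmem : (i, j) ∈ F.filter (fun e => e.1 = i) := Finset.mem_filter.2 ⟨hjF, rfl⟩
          rw [he₀, Finset.mem_singleton] at hmem
          exact hj (by rw [← hmem])
        have hiF : (i, e₀.2) ∈ F := by
          have heq : (i, e₀.2) = e₀ := by rw [← he₀1, Prod.mk.eta]
          rw [heq]
          exact he₀F
        have hsplit : y₀ i e₀.2 + ∑ j ∈ Finset.univ.erase e₀.2, y₀ i j = 1 := by
          rw [← (hy₀simp i).2.2]
          exact Finset.add_sum_erase Finset.univ (fun j => y₀ i j) (Finset.mem_univ e₀.2)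
        set k : ℤ := ∑ j ∈ Finset.univ.erase e₀.2, (if y₀ i j = 1 then (1:ℤ) else 0) with hk
        have hkcast : ((k : ℤ) : ℝ) = ∑ j ∈ Finset.univ.erase e₀.2, y₀ i j := by
          rw [hk]
          push_cast
          refine Finset.sum_congr rfl (fun j hj => ?_)
          rcases hint i j (hothers j (Finset.ne_of_mem_erase hj)) with h | h <;> simp [h]
        have hfrac := hFrange i e₀.2 hiF
        have h1 : y₀ i e₀.2 = 1 - (k : ℝ) := by
          rw [← hkcast] at hsplit
          linarith
        have hk0 : (0:ℤ) < 1 - k := by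
          have hr : (0:ℝ) < 1 - (k:ℝ) := by rw [← h1]; exact hfrac.1
          exact_mod_cast hr
        have hk1 : (1:ℤ) - k < 1 := by
          have hr : (1:ℝ) - (k:ℝ) < 1 := by rw [← h1]; exact hfrac.2
          exact_mod_cast hr
        omega
      have hcolstrict : ∀ c : Fin d, (F.filter (fun e => e.2 = c)).card = 1 →
          (a c : ℝ) < x c := by
        intro c hcard
        obtain ⟨e₀, he₀⟩ := Finset.card_eq_one.1 hcard
        have he₀mem : e₀ ∈ F.filter (fun e => e.2 = c) := he₀ ▸ Finset.mem_singleton_self e₀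
        obtain ⟨he₀F, he₀2⟩ := Finset.mem_filter.1 he₀mem
        have hothers : ∀ i, i ≠ e₀.1 → (i, c) ∉ F := by
          intro i hi hiF
          have hmem : (i, c) ∈ F.filter (fun e => e.2 = c) := Finset.mem_filter.2 ⟨hiF, rfl⟩
          rw [he₀, Finset.mem_singleton] at hmem
          exact hi (by rw [← hmem])
        have hiF : (e₀.1, c) ∈ F := by
          have heq : (e₀.1, c) = e₀ := by rw [← he₀2, Prod.mk.eta]
          rw [heq]
          exact he₀F
        have hsplit : y₀ e₀.1 c + ∑ i ∈ Finset.univ.erase e₀.1, y₀ i c = x c := by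
          rw [hxc c]
          exact Finset.add_sum_erase Finset.univ (fun i => y₀ i c) (Finset.mem_univ e₀.1)
        set k : ℤ := ∑ i ∈ Finset.univ.erase e₀.1, (if y₀ i c = 1 then (1:ℤ) else 0) with hk
        have hkcast : ((k : ℤ) : ℝ) = ∑ i ∈ Finset.univ.erase e₀.1, y₀ i c := by
          rw [hk]
          push_cast
          refine Finset.sum_congr rfl (fun i hi => ?_)
          rcases hint i c (hothers i (Finset.ne_of_mem_erase hi)) with h | h <;> simp [h]
        have hfrac := hFrange e₀.1 c hiF
        have hge : (a c : ℝ) ≤ x c := hx.1.2 c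
        rcases lt_or_eq_of_le hge with h | h
        · exact h
        · exfalso
          have h1 : y₀ e₀.1 c = (a c : ℝ) - (k : ℝ) := by
            rw [← hkcast] at hsplit
            rw [← h] at hsplit
            linarith
          have hk0 : (0:ℤ) < a c - k := by
            have hr : (0:ℝ) < (a c : ℝ) - (k:ℝ) := by rw [← h1]; exact hfrac.1
            exact_mod_cast hr
          have hk1 : (a c : ℤ) - k < 1 := by
            have hr : (a c : ℝ) - (k:ℝ) < 1 := by rw [← h1]; exact hfrac.2
            exact_mod_cast hr
          omega
      obtain ⟨Z, hZne, hZsupp, hZrow, hZcol⟩ := exists_balanced F hFnon hrowcard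
      set B : ℝ := 1 + ∑ i, ∑ j, |Z i j| with hB
      have habs_nonneg : (0:ℝ) ≤ ∑ i, ∑ j, |Z i j| :=
        Finset.sum_nonneg fun i _ => Finset.sum_nonneg fun j _ => abs_nonneg _
      have hBpos : 0 < B := by rw [hB]; linarith
      have hZbound : ∀ i j, |Z i j| ≤ B := by
        intro i j
        have h1 : |Z i j| ≤ ∑ j', |Z i j'| :=
          Finset.single_le_sum (f := fun j' => |Z i j'|) (fun _ _ => abs_nonneg _)
            (Finset.mem_univ j)
        have h2 : ∑ j', |Z i j'| ≤ ∑ i', ∑ j', |Z i' j'| :=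
          Finset.single_le_sum (f := fun i' => ∑ j', |Z i' j'|)
            (fun i' _ => Finset.sum_nonneg fun j' _ => abs_nonneg _) (Finset.mem_univ i)
        rw [hB]
        linarith
      have hZcolbound : ∀ c, |∑ i, Z i c| ≤ B := by
        intro c
        calc |∑ i, Z i c| ≤ ∑ i, |Z i c| := Finset.abs_sum_le_sum_abs _ _
        _ ≤ ∑ i, ∑ j, |Z i j| := Finset.sum_le_sum
            (fun i _ => Finset.single_le_sum (f := fun j => |Z i j|)
              (fun j _ => abs_nonneg _) (Finset.mem_univ c))
        _ ≤ B := by rw [hB]; linarith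
      set δ₁ : ℝ := F.inf' hFnon (fun e => y₀ e.1 e.2) with hδ₁
      have hδ₁pos : 0 < δ₁ := by
        rw [hδ₁, Finset.lt_inf'_iff]
        intro e he
        exact (hFrange e.1 e.2 (by rwa [Prod.mk.eta])).1
      have hδ₁le : ∀ e ∈ F, δ₁ ≤ y₀ e.1 e.2 := fun e he => Finset.inf'_le _ he
      have hδ₂ex : ∃ δ₂ : ℝ, 0 < δ₂ ∧ ∀ c : Fin d,
          (F.filter (fun e => e.2 = c)).card = 1 → δ₂ ≤ x c - a c := by
        rcases (Finset.univ.filter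
            (fun c : Fin d => (F.filter (fun e => e.2 = c)).card = 1)).eq_empty_or_nonempty
          with hempty | hne'
        · refine ⟨1, one_pos, fun c hc => ?_⟩
          exact absurd
            ((Finset.mem_filter (a := c)).2 (⟨Finset.mem_univ c, hc⟩ :
              c ∈ Finset.univ ∧ (F.filter (fun e => e.2 = c)).card = 1))
            (by rw [hempty]; exact Finset.notMem_empty _)
        · refine ⟨(Finset.univ.filter
              (fun c : Fin d => (F.filter (fun e => e.2 = c)).card = 1)).inf' hne'
              (fun c => x c - (a c : ℝ)), ?_, ?_⟩
          · rw [Finset.lt_inf'_iff]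
            intro c hc
            have h := hcolstrict c (Finset.mem_filter.1 hc).2
            linarith
          · intro c hc
            exact Finset.inf'_le (f := fun c => x c - (a c : ℝ))
              (Finset.mem_filter.2 ⟨Finset.mem_univ _, hc⟩)
      obtain ⟨δ₂, hδ₂pos, hδ₂le⟩ := hδ₂ex
      set ε : ℝ := min δ₁ δ₂ / B with hε
      have hεpos : 0 < ε := div_pos (lt_min hδ₁pos hδ₂pos) hBpos
      have hεZ : ∀ i j, ε * |Z i j| ≤ min δ₁ δ₂ := by
        intro i j
        calc ε * |Z i j| ≤ ε * B := mul_le_mul_of_nonneg_left (hZbound i j) hεpos.le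
        _ = min δ₁ δ₂ := by
            rw [hε, div_mul_cancel₀ _ (ne_of_gt hBpos)]
      have hεcol : ∀ c, ε * |∑ i, Z i c| ≤ min δ₁ δ₂ := by
        intro c
        calc ε * |∑ i, Z i c| ≤ ε * B := mul_le_mul_of_nonneg_left (hZcolbound c) hεpos.le
        _ = min δ₁ δ₂ := by
            rw [hε, div_mul_cancel₀ _ (ne_of_gt hBpos)]
      have hQmem : ∀ s : ℝ, |s| ≤ 1 → (y₀ + (s * ε) • Z) ∈ Q := by
        intro s hs
        have hsb : ∀ i j, |s * ε * Z i j| ≤ min δ₁ δ₂ := by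
          intro i j
          rw [abs_mul, abs_mul, abs_of_pos hεpos, mul_assoc]
          calc |s| * (ε * |Z i j|) ≤ 1 * (ε * |Z i j|) :=
              mul_le_mul_of_nonneg_right hs (by positivity)
          _ = ε * |Z i j| := one_mul _
          _ ≤ min δ₁ δ₂ := hεZ i j
        have happly : ∀ i j, (y₀ + (s * ε) • Z) i j = y₀ i j + s * ε * Z i j := by
          intro i j
          simp [Pi.add_apply, Pi.smul_apply, smul_eq_mul, mul_assoc]
        constructor
        · intro i
          rw [mem_simplexOf_iff]
          refine ⟨fun j => ?_, fun j hj => ?_, ?_⟩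
          · rw [happly]
            by_cases hij : (i, j) ∈ F
            · have hy : δ₁ ≤ y₀ i j := hδ₁le (i, j) hij
              have habs : -(min δ₁ δ₂) ≤ s * ε * Z i j := neg_le_of_abs_le (hsb i j)
              have hm : min δ₁ δ₂ ≤ δ₁ := min_le_left _ _
              linarith
            · rw [hZsupp i j hij, mul_zero, add_zero]
              exact (hy₀simp i).1 j
          · have hy0 : y₀ i j = 0 := (hy₀simp i).2.1 j hj
            have hF0 : (i, j) ∉ F := fun hmem => ((hmemF i j).1 hmem).1 hy0
            rw [happly, hy0, hZsupp i j hF0, mul_zero, add_zero]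
          · have he : ∑ j', (y₀ + (s * ε) • Z) i j'
                = (∑ j', y₀ i j') + (s * ε) * ∑ j', Z i j' := by
              rw [Finset.mul_sum, ← Finset.sum_add_distrib]
              exact Finset.sum_congr rfl (fun j' _ => happly i j')
            rw [he, hZrow i, (hy₀simp i).2.2, mul_zero, add_zero]
        · intro c
          have he : ∑ i, (y₀ + (s * ε) • Z) i c = x c + (s * ε) * ∑ i, Z i c := by
            rw [hxc c, Finset.mul_sum, ← Finset.sum_add_distrib]
            exact Finset.sum_congr rfl (fun i _ => happly i c)
          rw [he]
          by_cases hc1 : (F.filter (fun e => e.2 = c)).card = 1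
          · have h1 := hδ₂le c hc1
            have habs : |s * ε * ∑ i, Z i c| ≤ min δ₁ δ₂ := by
              rw [abs_mul, abs_mul, abs_of_pos hεpos, mul_assoc]
              calc |s| * (ε * |∑ i, Z i c|) ≤ 1 * (ε * |∑ i, Z i c|) :=
                  mul_le_mul_of_nonneg_right hs (by positivity)
              _ = ε * |∑ i, Z i c| := one_mul _
              _ ≤ min δ₁ δ₂ := hεcol c
            have hge2 : -(min δ₁ δ₂) ≤ s * ε * ∑ i, Z i c := neg_le_of_abs_le habs
            have hm : min δ₁ δ₂ ≤ δ₂ := min_le_right _ _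
            have hassoc : (s * ε) * ∑ i, Z i c = s * ε * ∑ i, Z i c := by ring
            rw [hassoc]
            linarith
          · rw [hZcol c hc1, mul_zero, add_zero]
            exact hx.1.2 c
      have hy₁ := hQmem (-1) (by norm_num)
      have hy₂ := hQmem 1 (by norm_num)
      have hy₀seg : y₀ ∈ openSegment ℝ (y₀ + ((-1) * ε) • Z) (y₀ + (1 * ε) • Z) := by
        refine ⟨1/2, 1/2, by norm_num, by norm_num, by norm_num, ?_⟩
        funext i
        funext j
        simp only [Pi.add_apply, Pi.smul_apply, smul_eq_mul]
        ring
      have heq1 := hy₀Qext.2 hy₁ hy₂ hy₀seg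
      have hzero : ((-1 : ℝ) * ε) • Z = 0 := add_eq_left.mp heq1
      rcases smul_eq_zero.1 hzero with hcoef | hZ0
      · have hne0 : (-1 : ℝ) * ε ≠ 0 := by
          rw [neg_one_mul, neg_ne_zero]
          exact hεpos.ne'
        exact hne0 hcoef
      · exact hZne hZ0
    intro j
    refine ⟨∑ i : Fin n, if y₀ i j = 1 then 1 else 0, ?_⟩
    rw [hxc j]
    push_cast
    refine Finset.sum_congr rfl (fun i _ => ?_)
    rcases hint i j (by rw [hFempty]; exact Finset.notMem_empty _) with h | h <;> simp [h]
  have hbound : ∀ x ∈ cell T ∩ S, ∀ j, 0 ≤ x j ∧ x j ≤ (n : ℝ) := by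
    intro x hx j
    have hxmem : x ∈ σ '' Q := himg ▸ hx
    obtain ⟨y, hyQ, rfl⟩ := hxmem
    rw [hσapp]
    constructor
    · exact Finset.sum_nonneg (fun i _ => (mem_simplexOf_iff.1 (hyQ.1 i)).1 j)
    · calc ∑ i, y i j ≤ ∑ _i : Fin n, (1:ℝ) :=
          Finset.sum_le_sum (fun i _ => le_one_of_mem_simplexOf (hyQ.1 i) j)
      _ = n := by simp
  set Vset : Set (Fin d → ℝ) := {x ∈ cell T ∩ S | ∀ j, ∃ zz : ℤ, x j = (zz : ℝ)} with hVset
  have hVfin : Vset.Finite := by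
    have hsub : Vset ⊆ (fun g : Fin d → ℤ => fun j => (g j : ℝ)) ''
        (Set.pi Set.univ (fun _ : Fin d => Set.Icc (0:ℤ) n)) := by
      rintro x ⟨hxP, hxint⟩
      choose g hg using hxint
      refine ⟨g, fun j _ => ?_, by
        funext j
        show ((g j : ℤ) : ℝ) = x j
        exact (hg j).symm⟩
      have hb := hbound x hxP j
      rw [hg j] at hb
      constructor
      · exact_mod_cast hb.1
      · exact_mod_cast hb.2
    exact Set.Finite.subset
      (Set.Finite.image _ (Set.Finite.pi (fun _ => Set.finite_Icc _ _))) hsub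
  refine ⟨hVfin.toFinset, ?_, ?_⟩
  · intro v hv j
    rw [Set.Finite.mem_toFinset] at hv
    exact hv.2 j
  · have hVsubset : (hVfin.toFinset : Set (Fin d → ℝ)) ⊆ cell T ∩ S := by
      intro v hv
      rw [Set.Finite.coe_toFinset] at hv
      exact hv.1
    refine le_antisymm ?_ (convexHull_min hVsubset hPconvex)
    have hKM := closure_convexHull_extremePoints hPcompact hPconvex
    rw [← hKM]
    have h1 : Set.extremePoints ℝ (cell T ∩ S) ⊆ (hVfin.toFinset : Set (Fin d → ℝ)) := by
      intro x hx
      rw [Set.Finite.coe_toFinset]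
      exact ⟨hx.1, hext x hx⟩
    calc closure (convexHull ℝ (Set.extremePoints ℝ (cell T ∩ S)))
        ⊆ closure (convexHull ℝ (hVfin.toFinset : Set (Fin d → ℝ))) :=
          closure_mono (convexHull_mono h1)
    _ = convexHull ℝ (hVfin.toFinset : Set (Fin d → ℝ)) :=
          IsClosed.closure_eq ((hVfin.toFinset.finite_toSet).isClosed_convexHull ℝ)

end TOMPaper
end
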